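/- arXiv:1503.07627 — 6 statements merged into one kernel-verified Lean document; each statement's English description precedes it below -/
import Mathlib

section
/- Let B be a countable Boolean algebra with Stone space S(B). The map assigning to a Borel probability measure μ on S(B) the function f_μ : B → [0,1] defined by f_μ(b) = μ(K(b)) is a bijection between the set of Borel probability measures on S(B) and the set of functions f : B → [0,1] satisfying f(⊤) = 1 and f(b ∨ c) = f(b) + f(c) whenever b ∧ c = ⊥. -/
open Filter Topology

/-- The Stone space of a Boolean algebra: the space of Boolean-algebra homomorphisms to the
two-element Boolean algebra, as a subspace of the product space `B → Bool`. -/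
def StoneSpace (B : Type*) [BooleanAlgebra B] : Type _ :=
  {f : B → Bool // f ⊤ = true ∧ f ⊥ = false ∧
    (∀ a b, f (a ⊔ b) = (f a || f b)) ∧ (∀ a b, f (a ⊓ b) = (f a && f b))}

instance (B : Type*) [BooleanAlgebra B] : TopologicalSpace (StoneSpace B) :=
  instTopologicalSpaceSubtype

noncomputable instance (B : Type*) [BooleanAlgebra B] : MeasurableSpace (StoneSpace B) :=
  borel (StoneSpace B)

instance (B : Type*) [BooleanAlgebra B] : BorelSpace (StoneSpace B) := ⟨rfl⟩

/-- the basic clopen set of the Stone space associated to an element of the Boolean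
algebra -/
def stoneClopen {B : Type*} [BooleanAlgebra B] (b : B) : Set (StoneSpace B) :=
  {h | h.1 b = true}

namespace StoneAux

variable {B : Type*} [BooleanAlgebra B]

lemma eval_top (h : StoneSpace B) : h.1 ⊤ = true := h.2.1
lemma eval_bot (h : StoneSpace B) : h.1 ⊥ = false := h.2.2.1
lemma eval_sup (h : StoneSpace B) (a b : B) : h.1 (a ⊔ b) = (h.1 a || h.1 b) := h.2.2.2.1 a b
lemma eval_inf (h : StoneSpace B) (a b : B) : h.1 (a ⊓ b) = (h.1 a && h.1 b) := h.2.2.2.2 a b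

lemma eval_compl (h : StoneSpace B) (b : B) : h.1 bᶜ = !h.1 b := by
  obtain ⟨f, ht, hb, hs, hi⟩ := h
  have h1 : (f b || f bᶜ) = true := by rw [← hs, sup_compl_eq_top, ht]
  have h2 : (f b && f bᶜ) = false := by rw [← hi, inf_compl_eq_bot, hb]
  cases hfb : f b <;> simp [hfb] at h1 h2 ⊢ <;> simp [h1, h2]

lemma eval_mono (h : StoneSpace B) {a b : B} (hab : a ≤ b) (ha : h.1 a = true) :
    h.1 b = true := by
  have : a ⊔ b = b := sup_eq_right.mpr hab
  have := eval_sup h a b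
  rw [sup_eq_right.mpr hab, ha] at this
  simpa using this.symm

lemma mem_stoneClopen_iff {h : StoneSpace B} {b : B} : h ∈ stoneClopen b ↔ h.1 b = true :=
  Iff.rfl

@[simp] lemma stoneClopen_top : stoneClopen (⊤ : B) = Set.univ := by
  ext h; simp [stoneClopen, eval_top]

@[simp] lemma stoneClopen_bot : stoneClopen (⊥ : B) = ∅ := by
  ext h; simp [stoneClopen, eval_bot]

@[simp] lemma stoneClopen_sup (a b : B) :
    stoneClopen (a ⊔ b) = stoneClopen a ∪ stoneClopen b := by
  ext h; simp [stoneClopen, eval_sup]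

@[simp] lemma stoneClopen_inf (a b : B) :
    stoneClopen (a ⊓ b) = stoneClopen a ∩ stoneClopen b := by
  ext h; simp [stoneClopen, eval_inf]

@[simp] lemma stoneClopen_compl (b : B) : stoneClopen bᶜ = (stoneClopen b)ᶜ := by
  ext h; simp [stoneClopen, eval_compl]

lemma isClopen_stoneClopen (b : B) : IsClopen (stoneClopen b) := by
  have : stoneClopen b = (Subtype.val : StoneSpace B → (B → Bool)) ⁻¹' {f | f b = true} := rfl
  rw [this]
  refine (IsClopen.preimage ?_ continuous_subtype_val)
  have : {f : B → Bool | f b = true} = (fun f : B → Bool => f b) ⁻¹' {true} := rfl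
  rw [this]
  exact (isClopen_discrete _).preimage (continuous_apply b)

lemma isOpen_stoneClopen (b : B) : IsOpen (stoneClopen b) := (isClopen_stoneClopen b).2

lemma measurableSet_stoneClopen (b : B) : MeasurableSet (stoneClopen b) :=
  (isOpen_stoneClopen b).measurableSet

lemma isClosed_pred : IsClosed {f : B → Bool | f ⊤ = true ∧ f ⊥ = false ∧
    (∀ a b, f (a ⊔ b) = (f a || f b)) ∧ (∀ a b, f (a ⊓ b) = (f a && f b))} := by
  have hor : Continuous fun p : Bool × Bool => p.1 || p.2 := continuous_of_discreteTopology
  have hand : Continuous fun p : Bool × Bool => p.1 && p.2 := continuous_of_discreteTopology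
  have : {f : B → Bool | f ⊤ = true ∧ f ⊥ = false ∧
      (∀ a b, f (a ⊔ b) = (f a || f b)) ∧ (∀ a b, f (a ⊓ b) = (f a && f b))} =
      {f : B → Bool | f ⊤ = true} ∩ ({f | f ⊥ = false} ∩
      ((⋂ a, ⋂ b, {f | f (a ⊔ b) = (f a || f b)}) ∩
       (⋂ a, ⋂ b, {f | f (a ⊓ b) = (f a && f b)}))) := by
    ext f; simp [Set.mem_iInter, Set.mem_setOf_eq]
  rw [this]
  refine (isClosed_eq (continuous_apply _) continuous_const).inter
    ((isClosed_eq (continuous_apply _) continuous_const).inter (IsClosed.inter ?_ ?_))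
  · refine isClosed_iInter fun a => isClosed_iInter fun b => isClosed_eq (continuous_apply _) ?_
    exact Continuous.comp (g := fun p : Bool × Bool => p.1 || p.2)
      (f := fun f : B → Bool => (f a, f b)) hor
      ((continuous_apply a).prodMk (continuous_apply b))
  · refine isClosed_iInter fun a => isClosed_iInter fun b => isClosed_eq (continuous_apply _) ?_
    exact Continuous.comp (g := fun p : Bool × Bool => p.1 && p.2)
      (f := fun f : B → Bool => (f a, f b)) hand
      ((continuous_apply a).prodMk (continuous_apply b))

instance : CompactSpace (StoneSpace B) :=
  isCompact_iff_compactSpace.mp (isClosed_pred (B := B)).isCompact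

instance [Countable B] : SecondCountableTopology (StoneSpace B) :=
  (Topology.IsEmbedding.subtypeVal (p := fun f : B → Bool => f ⊤ = true ∧ f ⊥ = false ∧
    (∀ a b, f (a ⊔ b) = (f a || f b)) ∧ (∀ a b, f (a ⊓ b) = (f a && f b)))).secondCountableTopology

/-- finset sup evaluation -/
lemma eval_finsetSup {ι : Type*} (h : StoneSpace B) (s : Finset ι) (g : ι → B) :
    h.1 (s.sup g) = true ↔ ∃ i ∈ s, h.1 (g i) = true := by
  classical
  induction s using Finset.induction_on with
  | empty => simp [eval_bot h]
  | insert _ _ hx ih =>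
    rw [Finset.sup_insert, eval_sup h]
    simp [ih]

lemma eval_finsetInf {ι : Type*} (h : StoneSpace B) (s : Finset ι) (g : ι → B) :
    h.1 (s.inf g) = true ↔ ∀ i ∈ s, h.1 (g i) = true := by
  classical
  induction s using Finset.induction_on with
  | empty => simp [eval_top h]
  | insert _ _ hx ih =>
    rw [Finset.inf_insert, eval_inf h]
    simp [ih]

/-- the basic clopens form a topological basis -/
lemma isBasis : TopologicalSpace.IsTopologicalBasis
    (Set.range (stoneClopen : B → Set (StoneSpace B))) := by
  classical
  refine TopologicalSpace.isTopologicalBasis_of_isOpen_of_nhds ?_ ?_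
  · rintro _ ⟨b, rfl⟩; exact isOpen_stoneClopen b
  · intro x U hxU hU
    obtain ⟨V, hV, rfl⟩ : ∃ V, IsOpen V ∧ Subtype.val ⁻¹' V = U := isOpen_induced_iff.mp hU
    obtain ⟨I, u, hu, hpi⟩ := isOpen_pi_iff.mp hV x.1 hxU
    refine ⟨stoneClopen (I.inf fun i => if x.1 i = true then i else iᶜ), ⟨_, rfl⟩, ?_, ?_⟩
    · rw [mem_stoneClopen_iff, eval_finsetInf]
      intro i _
      by_cases hxi : x.1 i = true
      · rw [if_pos hxi]; exact hxi
      · rw [if_neg hxi, eval_compl]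
        cases hx' : x.1 i
        · rfl
        · exact absurd hx' hxi
    · intro y hy
      rw [mem_stoneClopen_iff, eval_finsetInf] at hy
      refine Set.mem_preimage.mpr (hpi ?_)
      intro i hi
      have hyi := hy i hi
      have heq : y.1 i = x.1 i := by
        by_cases hxi : x.1 i = true
        · rw [if_pos hxi] at hyi; rw [hyi, hxi]
        · rw [if_neg hxi, eval_compl] at hyi
          simp only [Bool.not_eq_true'] at hyi
          cases hx' : x.1 i
          · rw [hyi]
          · exact absurd hx' hxi
      rw [heq]
      exact (hu i hi).2

/-- separation of a point from a compact set -/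
lemma sep_point_compact {x : StoneSpace B} {T : Set (StoneSpace B)} (hT : IsCompact T)
    (hx : x ∉ T) : ∃ c : B, x ∈ stoneClopen c ∧ T ⊆ stoneClopen cᶜ := by
  classical
  have key : ∀ y : T, ∃ d : B, (y : StoneSpace B).1 d = true ∧ x.1 d = false := by
    rintro ⟨y, hy⟩
    have hne : y.1 ≠ x.1 := by
      intro hxy
      exact hx (Subtype.ext hxy ▸ hy)
    obtain ⟨e, he⟩ := Function.ne_iff.mp hne
    cases hye : y.1 e
    · have hxe : x.1 e = true := by
        cases hxe : x.1 e
        · exact absurd (hye.trans hxe.symm) he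
        · rfl
      refine ⟨eᶜ, ?_, ?_⟩
      · rw [eval_compl, hye]; rfl
      · rw [eval_compl, hxe]; rfl
    · have hxe : x.1 e = false := by
        cases hxe : x.1 e
        · rfl
        · exact absurd (hye.trans hxe.symm) he
      exact ⟨e, hye, hxe⟩
  choose d hd1 hd2 using key
  have hcov : T ⊆ ⋃ y : T, stoneClopen (d y) := fun y hy =>
    Set.mem_iUnion.mpr ⟨⟨y, hy⟩, hd1 ⟨y, hy⟩⟩
  obtain ⟨t, ht⟩ := hT.elim_finite_subcover (fun y : T => stoneClopen (d y))
    (fun y => isOpen_stoneClopen _) hcov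
  refine ⟨(t.sup d)ᶜ, ?_, ?_⟩
  · rw [mem_stoneClopen_iff, eval_compl]
    have : x.1 (t.sup d) = false := by
      rw [Bool.eq_false_iff]
      intro hsup
      obtain ⟨i, _, hi⟩ := (eval_finsetSup x t d).mp hsup
      rw [hd2 i] at hi; exact Bool.false_ne_true hi
    simp [this]
  · intro y hy
    obtain ⟨i, hi, hyi⟩ := Set.mem_iUnion₂.mp (ht hy)
    rw [mem_stoneClopen_iff, compl_compl, eval_finsetSup]
    exact ⟨i, hi, hyi⟩

/-- separation of disjoint compact sets by clopens -/
lemma sep_compact_compact {S T : Set (StoneSpace B)} (hS : IsCompact S) (hT : IsCompact T)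
    (hST : Disjoint S T) : ∃ b : B, S ⊆ stoneClopen b ∧ T ⊆ stoneClopen bᶜ := by
  classical
  have key : ∀ x : S, ∃ c : B, (x : StoneSpace B) ∈ stoneClopen c ∧ T ⊆ stoneClopen cᶜ := by
    rintro ⟨x, hx⟩
    exact sep_point_compact hT (fun hxT => Set.disjoint_left.mp hST hx hxT)
  choose c hc1 hc2 using key
  have hcov : S ⊆ ⋃ x : S, stoneClopen (c x) := fun x hx =>
    Set.mem_iUnion.mpr ⟨⟨x, hx⟩, hc1 ⟨x, hx⟩⟩
  obtain ⟨s, hs⟩ := hS.elim_finite_subcover (fun x : S => stoneClopen (c x))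
    (fun x => isOpen_stoneClopen _) hcov
  refine ⟨s.sup c, ?_, ?_⟩
  · intro x hx
    obtain ⟨i, hi, hxi⟩ := Set.mem_iUnion₂.mp (hs hx)
    rw [mem_stoneClopen_iff, eval_finsetSup]
    exact ⟨i, hi, hxi⟩
  · intro y hy
    rw [mem_stoneClopen_iff, eval_compl]
    have : y.1 (s.sup c) = false := by
      rw [Bool.eq_false_iff]
      intro hsup
      obtain ⟨i, _, hi⟩ := (eval_finsetSup y s c).mp hsup
      have := hc2 i hy
      rw [mem_stoneClopen_iff, eval_compl, hi] at this
      simp at this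
    simp [this]

/-- Stone representation: every nonzero element has a point in its clopen (BPI). -/
lemma stoneClopen_nonempty {a : B} (ha : a ≠ ⊥) : (stoneClopen a).Nonempty := by
  classical
  set P : Set (Set B) := {F | a ∈ F ∧ ⊥ ∉ F ∧ (∀ x ∈ F, ∀ y, x ≤ y → y ∈ F) ∧
    (∀ x ∈ F, ∀ y ∈ F, x ⊓ y ∈ F)} with hP
  have hF0 : {x : B | a ≤ x} ∈ P := by
    refine ⟨le_refl a, fun h => ha (le_bot_iff.mp h), ?_, ?_⟩
    · intro x hx y hxy; exact le_trans hx hxy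
    · intro x hx y hy; exact le_inf hx hy
  have hchain : ∀ c ⊆ P, IsChain (· ⊆ ·) c → c.Nonempty →
      ∃ ub ∈ P, ∀ s ∈ c, s ⊆ ub := by
    intro c hcP hchain ⟨F1, hF1⟩
    refine ⟨⋃₀ c, ⟨?_, ?_, ?_, ?_⟩, fun s hs => Set.subset_sUnion_of_mem hs⟩
    · exact ⟨F1, hF1, (hcP hF1).1⟩
    · rintro ⟨F, hF, hbot⟩; exact (hcP hF).2.1 hbot
    · rintro x ⟨F, hF, hxF⟩ y hxy
      exact ⟨F, hF, (hcP hF).2.2.1 x hxF y hxy⟩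
    · rintro x ⟨F, hF, hxF⟩ y ⟨G, hG, hyG⟩
      rcases hchain.total hF hG with h | h
      · exact ⟨G, hG, (hcP hG).2.2.2 x (h hxF) y hyG⟩
      · exact ⟨F, hF, (hcP hF).2.2.2 x hxF y (h hyG)⟩
  obtain ⟨M, _, hMmax⟩ := zorn_subset_nonempty P hchain _ hF0
  have hMP : M ∈ P := hMmax.1
  obtain ⟨haM, hbotM, hup, hmeet⟩ := hMP
  have hultra : ∀ x : B, x ∈ M ∨ xᶜ ∈ M := by
    intro x
    by_contra hcon
    push_neg at hcon
    obtain ⟨hxM, hxcM⟩ := hcon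
    set M' : Set B := {z | ∃ y ∈ M, y ⊓ x ≤ z} with hM'
    have hM'P : M' ∈ P := by
      refine ⟨⟨a, haM, inf_le_left⟩, ?_, ?_, ?_⟩
      · rintro ⟨y, hyM, hyx⟩
        have : y ⊓ x = ⊥ := le_bot_iff.mp hyx
        have hyc : y ≤ xᶜ := le_compl_iff_disjoint_right.mpr (disjoint_iff.mpr this)
        exact hxcM (hup y hyM xᶜ hyc)
      · rintro z ⟨y, hyM, hyx⟩ w hzw
        exact ⟨y, hyM, le_trans hyx hzw⟩
      · rintro z ⟨y1, hy1, h1⟩ w ⟨y2, hy2, h2⟩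
        refine ⟨y1 ⊓ y2, hmeet y1 hy1 y2 hy2, ?_⟩
        calc y1 ⊓ y2 ⊓ x ≤ (y1 ⊓ x) ⊓ (y2 ⊓ x) := by
              refine le_inf (inf_le_inf_right x inf_le_left) (inf_le_inf_right x inf_le_right)
          _ ≤ z ⊓ w := inf_le_inf h1 h2
    have hMM' : M ⊆ M' := fun y hy => ⟨y, hy, inf_le_left⟩
    have hsub : M' ⊆ M := hMmax.2 hM'P hMM'
    exact hxM (hsub ⟨a, haM, inf_le_right⟩)
  have hd : ∀ x y : B, x ∈ M → y ∈ M → ¬ (x ⊓ y = ⊥) := by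
    intro x y hx hy hbot
    exact hbotM (hbot ▸ hmeet x hx y hy)
  refine ⟨⟨fun x => decide (x ∈ M), ?_, ?_, ?_, ?_⟩, ?_⟩
  · simp only [decide_eq_true_eq]
    exact hup a haM ⊤ le_top
  · simp only [decide_eq_false_iff_not]
    exact hbotM
  · intro x y
    by_cases hx : x ∈ M
    · simp [hx, hup x hx (x ⊔ y) le_sup_left]
    · by_cases hy : y ∈ M
      · simp [hx, hy, hup y hy (x ⊔ y) le_sup_right]
      · have hxc : xᶜ ∈ M := (hultra x).resolve_left hx
        have hyc : yᶜ ∈ M := (hultra y).resolve_left hy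
        have hsup : x ⊔ y ∉ M := by
          intro hs
          have h1 : xᶜ ⊓ yᶜ ∈ M := hmeet _ hxc _ hyc
          have h2 : (x ⊔ y) ⊓ (xᶜ ⊓ yᶜ) = ⊥ := by
            rw [← compl_sup, inf_compl_eq_bot]
          exact hd _ _ hs h1 h2
        simp [hx, hy, hsup]
  · intro x y
    by_cases hx : x ∈ M <;> by_cases hy : y ∈ M
    · simp [hx, hy, hmeet x hx y hy]
    · have : x ⊓ y ∉ M := fun h => hy (hup _ h y inf_le_right)
      simp [hx, hy, this]
    · have : x ⊓ y ∉ M := fun h => hx (hup _ h x inf_le_left)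
      simp [hx, hy, this]
    · have : x ⊓ y ∉ M := fun h => hx (hup _ h x inf_le_left)
      simp [hx, hy, this]
  · show decide (a ∈ M) = true
    simp [haM]

end StoneAux
open NNReal ENNReal in
theorem _dummy : True := trivial
open NNReal ENNReal
namespace StoneAux
variable {B : Type*} [BooleanAlgebra B]

instance : T2Space (StoneSpace B) :=
  (Topology.IsEmbedding.subtypeVal (p := fun f : B → Bool => f ⊤ = true ∧ f ⊥ = false ∧
    (∀ a b, f (a ⊔ b) = (f a || f b)) ∧ (∀ a b, f (a ⊓ b) = (f a && f b)))).t2Space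

section F
variable {f : B → ℝ}

def IsFA (f : B → ℝ) : Prop :=
  f ⊤ = 1 ∧ (∀ b, f b ∈ Set.Icc (0 : ℝ) 1) ∧ ∀ b c, b ⊓ c = ⊥ → f (b ⊔ c) = f b + f c

lemma IsFA.f_bot (hf : IsFA f) : f ⊥ = 0 := by
  have := hf.2.2 ⊥ ⊥ (by simp)
  simp at this
  linarith

lemma IsFA.f_mono (hf : IsFA f) {b c : B} (hbc : b ≤ c) : f b ≤ f c := by
  have h1 : b ⊓ (c \ b) = ⊥ := inf_sdiff_self_right
  have h2 : b ⊔ (c \ b) = c := by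
    rw [sdiff_eq, sup_inf_left, sup_compl_eq_top, inf_top_eq]
    exact sup_eq_right.mpr hbc
  have := hf.2.2 b (c \ b) h1
  rw [h2] at this
  have := (hf.2.1 (c \ b)).1
  linarith

lemma IsFA.f_subadd (hf : IsFA f) (b c : B) : f (b ⊔ c) ≤ f b + f c := by
  have h1 : b ⊓ (c \ b) = ⊥ := inf_sdiff_self_right
  have h2 : b ⊔ (c \ b) = b ⊔ c := by
    rw [sdiff_eq, sup_inf_left, sup_compl_eq_top, inf_top_eq]
  have h3 := hf.2.2 b (c \ b) h1
  rw [h2] at h3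
  have h4 : f (c \ b) ≤ f c := hf.f_mono sdiff_le
  linarith

lemma IsFA.f_mono_clopen (hf : IsFA f) {b c : B}
    (h : stoneClopen b ⊆ stoneClopen c) : f b ≤ f c := by
  have hbot : b \ c = ⊥ := by
    by_contra hne
    obtain ⟨x, hx⟩ := stoneClopen_nonempty hne
    rw [mem_stoneClopen_iff] at hx
    rw [sdiff_eq] at hx
    rw [eval_inf, eval_compl] at hx
    have hxb : x.1 b = true := by
      cases h1 : x.1 b
      · rw [h1] at hx; simp at hx
      · rfl
    have hxc : x.1 c = false := by
      cases h1 : x.1 c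
      · rfl
      · rw [hxb, h1] at hx; simp at hx
    have := h hxb
    rw [mem_stoneClopen_iff, hxc] at this
    simp at this
  have h1 : (b ⊓ c) ⊓ (b \ c) = ⊥ := inf_inf_sdiff b c
  have h2 : (b ⊓ c) ⊔ (b \ c) = b := sup_inf_sdiff b c
  have h3 := hf.2.2 (b ⊓ c) (b \ c) h1
  rw [h2, hbot, hf.f_bot] at h3
  have h4 : f (b ⊓ c) ≤ f c := hf.f_mono inf_le_right
  linarith

/-- the approximation of a set from outside by basic clopens -/
noncomputable def lam (f : B → ℝ) (S : Set (StoneSpace B)) : ℝ≥0 :=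
  sInf ((fun b => (f b).toNNReal) '' {b | S ⊆ stoneClopen b})

lemma lam_le (f : B → ℝ) {S : Set (StoneSpace B)} {b : B} (h : S ⊆ stoneClopen b) :
    lam f S ≤ (f b).toNNReal :=
  csInf_le (OrderBot.bddBelow _) ⟨b, h, rfl⟩

lemma le_lam (f : B → ℝ) {S : Set (StoneSpace B)} {x : ℝ≥0}
    (h : ∀ b, S ⊆ stoneClopen b → x ≤ (f b).toNNReal) : x ≤ lam f S :=
  le_csInf ⟨(f ⊤).toNNReal, ⟨⊤, by simp, rfl⟩⟩ (by rintro _ ⟨b, hb, rfl⟩; exact h b hb)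

lemma lam_mono (f : B → ℝ) {S T : Set (StoneSpace B)} (h : S ⊆ T) : lam f S ≤ lam f T :=
  le_lam f fun b hb => lam_le f (h.trans hb)

lemma lam_stoneClopen (hf : IsFA f) (b : B) : lam f (stoneClopen b) = (f b).toNNReal := by
  refine le_antisymm (lam_le f subset_rfl) (le_lam f fun c hc => ?_)
  exact Real.toNNReal_mono (hf.f_mono_clopen hc)

lemma le_csInf_add_csInf {A C : Set ℝ≥0} (hA : A.Nonempty) (hC : C.Nonempty) {x : ℝ≥0}
    (h : ∀ a ∈ A, ∀ c ∈ C, x ≤ a + c) : x ≤ sInf A + sInf C := by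
  have h1 : ∀ a ∈ A, x - a ≤ sInf C := fun a ha =>
    le_csInf hC fun c hc => tsub_le_iff_left.mpr (h a ha c hc)
  have h2 : ∀ a ∈ A, x - sInf C ≤ a := fun a ha =>
    tsub_le_iff_right.mpr (tsub_le_iff_left.mp (h1 a ha))
  have h3 : x - sInf C ≤ sInf A := le_csInf hA h2
  calc x ≤ x - sInf C + sInf C := le_tsub_add
    _ ≤ sInf A + sInf C := by gcongr

lemma lam_union_le (hf : IsFA f) (S T : Set (StoneSpace B)) :
    lam f (S ∪ T) ≤ lam f S + lam f T := by
  refine le_csInf_add_csInf ?_ ?_ ?_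
  · exact ⟨(f ⊤).toNNReal, ⟨⊤, by simp, rfl⟩⟩
  · exact ⟨(f ⊤).toNNReal, ⟨⊤, by simp, rfl⟩⟩
  rintro _ ⟨b, hb, rfl⟩ _ ⟨c, hc, rfl⟩
  have hsub : S ∪ T ⊆ stoneClopen (b ⊔ c) := by
    rw [stoneClopen_sup]; exact Set.union_subset_union hb hc
  calc lam f (S ∪ T) ≤ (f (b ⊔ c)).toNNReal := lam_le f hsub
    _ ≤ (f b + f c).toNNReal := Real.toNNReal_mono (hf.f_subadd b c)
    _ ≤ (f b).toNNReal + (f c).toNNReal := Real.toNNReal_add_le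

lemma lam_union_disjoint (hf : IsFA f) {S T : Set (StoneSpace B)} (hS : IsCompact S)
    (hT : IsCompact T) (hST : Disjoint S T) :
    lam f (S ∪ T) = lam f S + lam f T := by
  refine le_antisymm (lam_union_le hf S T) ?_
  obtain ⟨b0, hSb0, hTb0⟩ := sep_compact_compact hS hT hST
  refine le_lam f fun c hc => ?_
  have hS' : S ⊆ stoneClopen (c ⊓ b0) := by
    rw [stoneClopen_inf]
    exact Set.subset_inter ((Set.subset_union_left).trans hc) hSb0
  have hT' : T ⊆ stoneClopen (c ⊓ b0ᶜ) := by
    rw [stoneClopen_inf]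
    exact Set.subset_inter ((Set.subset_union_right).trans hc) hTb0
  have hdisj : (c ⊓ b0) ⊓ (c ⊓ b0ᶜ) = ⊥ := by
    calc (c ⊓ b0) ⊓ (c ⊓ b0ᶜ) = (c ⊓ c) ⊓ (b0 ⊓ b0ᶜ) := by ac_rfl
      _ = ⊥ := by rw [inf_compl_eq_bot, inf_bot_eq]
  have hsup : (c ⊓ b0) ⊔ (c ⊓ b0ᶜ) = c := by
    rw [← inf_sup_left, sup_compl_eq_top, inf_top_eq]
  have hadd : f c = f (c ⊓ b0) + f (c ⊓ b0ᶜ) := by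
    have := hf.2.2 (c ⊓ b0) (c ⊓ b0ᶜ) hdisj
    rw [hsup] at this
    exact this
  calc lam f S + lam f T ≤ (f (c ⊓ b0)).toNNReal + (f (c ⊓ b0ᶜ)).toNNReal :=
        add_le_add (lam_le f hS') (lam_le f hT')
    _ = (f (c ⊓ b0) + f (c ⊓ b0ᶜ)).toNNReal :=
        (Real.toNNReal_add (hf.2.1 _).1 (hf.2.1 _).1).symm
    _ = (f c).toNNReal := by rw [← hadd]

/-- the content induced by a finitely additive function -/
noncomputable def contOf (f : B → ℝ) (hf : IsFA f) : MeasureTheory.Content (StoneSpace B) where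
  toFun K := lam f K
  mono' K₁ K₂ h := lam_mono f h
  sup_disjoint' K₁ K₂ hd _ _ := lam_union_disjoint hf K₁.2 K₂.2 hd
  sup_le' K₁ K₂ := lam_union_le hf K₁ K₂

lemma contOf_measure_stoneClopen (hf : IsFA f) (b : B) :
    (contOf f hf).measure (stoneClopen b) = ENNReal.ofReal (f b) := by
  rw [MeasureTheory.Content.measure_apply _ (measurableSet_stoneClopen b),
    MeasureTheory.Content.outerMeasure_of_isOpen _ _ (isOpen_stoneClopen b),
    MeasureTheory.Content.innerContent_of_isCompact _
      ((isClopen_stoneClopen b).1.isCompact) (isOpen_stoneClopen b)]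
  show ((lam f (stoneClopen b) : ℝ≥0) : ℝ≥0∞) = _
  rw [lam_stoneClopen hf b]
  simp [ENNReal.ofReal]

end F
end StoneAux

open MeasureTheory in
/-- for a countable Boolean algebra B, the map μ ↦ (b ↦ μ(K(b))) is a bijection
between Borel probability measures on the Stone space of B and the [0,1]-valued functions f
on B with f(⊤) = 1 which are additive on disjoint pairs. -/
theorem stmt0 (B : Type*) [BooleanAlgebra B] [Countable B] :
    Set.BijOn
      (fun (μ : MeasureTheory.ProbabilityMeasure (StoneSpace B)) (b : B) =>
        ((μ : MeasureTheory.Measure (StoneSpace B)) (stoneClopen b)).toReal)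
      Set.univ
      {f : B → ℝ | f ⊤ = 1 ∧ (∀ b, f b ∈ Set.Icc (0 : ℝ) 1) ∧
        ∀ b c, b ⊓ c = ⊥ → f (b ⊔ c) = f b + f c} := by
  classical
  have hgen : (borel (StoneSpace B)) = MeasurableSpace.generateFrom
      (Set.range (stoneClopen : B → Set (StoneSpace B))) :=
    StoneAux.isBasis.borel_eq_generateFrom
  have hpi : IsPiSystem (Set.range (stoneClopen : B → Set (StoneSpace B))) := by
    rintro _ ⟨b, rfl⟩ _ ⟨c, rfl⟩ _
    exact ⟨b ⊓ c, StoneAux.stoneClopen_inf b c⟩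
  refine ⟨?_, ?_, ?_⟩
  · -- MapsTo
    intro μ _
    refine ⟨?_, ?_, ?_⟩
    · show ((μ : Measure (StoneSpace B)) (stoneClopen ⊤)).toReal = 1
      rw [StoneAux.stoneClopen_top, measure_univ]
      simp
    · intro b
      constructor
      · exact ENNReal.toReal_nonneg
      · show ((μ : Measure (StoneSpace B)) (stoneClopen b)).toReal ≤ 1
        have h1 : (μ : Measure (StoneSpace B)) (stoneClopen b) ≤ 1 := prob_le_one
        calc ((μ : Measure (StoneSpace B)) (stoneClopen b)).toReal
            ≤ (1 : ℝ≥0∞).toReal := ENNReal.toReal_mono ENNReal.one_ne_top h1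
          _ = 1 := by simp
    · intro b c hbc
      show ((μ : Measure (StoneSpace B)) (stoneClopen (b ⊔ c))).toReal = _
      have hdisj : Disjoint (stoneClopen b) (stoneClopen c) := by
        rw [Set.disjoint_iff_inter_eq_empty, ← StoneAux.stoneClopen_inf, hbc,
          StoneAux.stoneClopen_bot]
      rw [StoneAux.stoneClopen_sup,
        measure_union hdisj (StoneAux.measurableSet_stoneClopen c),
        ENNReal.toReal_add (measure_ne_top _ _) (measure_ne_top _ _)]
  · -- InjOn
    intro μ _ ν _ hfeq
    have hext : (μ : Measure (StoneSpace B)) = (ν : Measure (StoneSpace B)) := by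
      refine MeasureTheory.ext_of_generate_finite _ hgen hpi ?_ ?_
      · rintro _ ⟨b, rfl⟩
        have := congrFun hfeq b
        exact (ENNReal.toReal_eq_toReal_iff' (measure_ne_top _ _) (measure_ne_top _ _)).mp this
      · rw [measure_univ, measure_univ]
    exact MeasureTheory.ProbabilityMeasure.toMeasure_injective hext
  · -- SurjOn
    intro f hf
    have hIsFA : StoneAux.IsFA f := hf
    set μ0 : Measure (StoneSpace B) := (StoneAux.contOf f hIsFA).measure with hμ0
    have hval : ∀ b, μ0 (stoneClopen b) = ENNReal.ofReal (f b) := fun b =>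
      StoneAux.contOf_measure_stoneClopen hIsFA b
    have hprob : IsProbabilityMeasure μ0 := by
      constructor
      rw [← StoneAux.stoneClopen_top, hval ⊤, hIsFA.1]
      simp
    refine ⟨⟨μ0, hprob⟩, Set.mem_univ _, ?_⟩
    funext b
    show (μ0 (stoneClopen b)).toReal = f b
    rw [hval b, ENNReal.toReal_ofReal (hIsFA.2.1 b).1]
end

section
/- Let L be a countable first-order language, let (A_n)_{n∈ℕ} be a sequence of finite L-structures, and let μ_{A_n} be the unique Borel probability measure on the Stone space S of the Lindenbaum–Tarski algebra B(L) with μ_{A_n}(K([φ])) = ⟨φ,A_n⟩ for every first-order formula φ. Then (A_n) is FO-convergent if and only if the measures μ_{A_n} converge weakly to some Borel probability measure μ on S, and in that case μ(K([φ])) = lim_{n→∞} ⟨φ,A_n⟩ for every first-order formula φ. -/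
open Filter Topology

open FirstOrder

/-- Stone pairing of a first-order formula with a finite structure -/
noncomputable def stonePairing (L : FirstOrder.Language) (A : Type*) [L.Structure A] {p : ℕ}
    (φ : L.Formula (Fin p)) : ℝ :=
  (Nat.card {v : Fin p → A // φ.Realize v} : ℝ) / (Nat.card A : ℝ) ^ p

/-- logical equivalence of formulas with free variables among x₀, x₁, …: in every
L-structure they are satisfied by exactly the same assignments -/
def LogEquiv {L : FirstOrder.Language} (φ ψ : L.Formula ℕ) : Prop :=
  ∀ (M : Type) [L.Structure M] (v : ℕ → M), φ.Realize v ↔ ψ.Realize v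

/-- `q` presents `B` as the Lindenbaum–Tarski algebra of the language `L`: it is a
surjection from formulas onto `B` identifying exactly the logically equivalent formulas
and mapping the logical connectives to the Boolean operations. -/
structure IsLindenbaumTarski (L : FirstOrder.Language) (B : Type*) [BooleanAlgebra B]
    (q : L.Formula ℕ → B) : Prop where
  surj : Function.Surjective q
  eq_iff : ∀ φ ψ, q φ = q ψ ↔ LogEquiv φ ψ
  map_inf : ∀ φ ψ, q (φ ⊓ ψ) = q φ ⊓ q ψ
  map_sup : ∀ φ ψ, q (φ ⊔ ψ) = q φ ⊔ q ψ
  map_not : ∀ φ, q φ.not = (q φ)ᶜ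
  map_top : q ⊤ = ⊤
  map_bot : q ⊥ = ⊥

/-- weak convergence of a sequence of Borel probability measures: convergence of the
integrals of every bounded continuous real function -/
def WeaklyConvergesTo {X : Type*} [TopologicalSpace X] [MeasurableSpace X]
    (μ : ℕ → MeasureTheory.ProbabilityMeasure X) (ν : MeasureTheory.ProbabilityMeasure X) :
    Prop :=
  ∀ g : BoundedContinuousFunction X ℝ,
    Tendsto (fun n => ∫ x, g x ∂(μ n : MeasureTheory.Measure X)) atTop
      (𝓝 (∫ x, g x ∂(ν : MeasureTheory.Measure X)))

section StoneBasics

variable {B : Type*} [BooleanAlgebra B]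

lemma StoneSpace.compl_apply (h : StoneSpace B) (b : B) : h.1 bᶜ = !h.1 b := by
  obtain ⟨f, htop, hbot, hsup, hinf⟩ := h
  have h1 : (f b || f bᶜ) = true := by rw [← hsup, sup_compl_eq_top, htop]
  have h2 : (f b && f bᶜ) = false := by rw [← hinf, inf_compl_eq_bot, hbot]
  cases hb : f b <;> cases hb' : f bᶜ <;> simp_all

@[simp] lemma mem_stoneClopen {h : StoneSpace B} {b : B} :
    h ∈ stoneClopen b ↔ h.1 b = true := Iff.rfl

@[simp] lemma stoneClopen_top : stoneClopen (⊤ : B) = Set.univ := by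
  ext h; simp [h.2.1]

@[simp] lemma stoneClopen_bot : stoneClopen (⊥ : B) = (∅ : Set (StoneSpace B)) := by
  ext h; simp [h.2.2.1]

@[simp] lemma stoneClopen_sup (a b : B) :
    stoneClopen (a ⊔ b) = stoneClopen a ∪ stoneClopen b := by
  ext h; simp [stoneClopen, Set.mem_union, h.2.2.2.1]

@[simp] lemma stoneClopen_inf (a b : B) :
    stoneClopen (a ⊓ b) = stoneClopen a ∩ stoneClopen b := by
  ext h; simp [stoneClopen, Set.mem_inter_iff, h.2.2.2.2]

@[simp] lemma stoneClopen_compl (b : B) :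
    stoneClopen bᶜ = (stoneClopen b)ᶜ := by
  ext h; simp [stoneClopen, StoneSpace.compl_apply]

lemma stoneClopen_finsetSup {ι : Type*} (t : Finset ι) (f : ι → B) :
    stoneClopen (t.sup f) = ⋃ i ∈ t, stoneClopen (f i) := by
  classical
  induction t using Finset.induction with
  | empty => simp
  | insert _ _ hx ih => simp [Finset.sup_insert, ih]

lemma stoneClopen_finsetInf {ι : Type*} (t : Finset ι) (f : ι → B) :
    stoneClopen (t.inf f) = ⋂ i ∈ t, stoneClopen (f i) := by
  classical
  induction t using Finset.induction with
  | empty => simp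
  | insert _ _ hx ih => simp [Finset.inf_insert, ih]

lemma continuous_stone_apply (b : B) :
    Continuous (fun h : StoneSpace B => h.1 b) :=
  (continuous_apply b).comp continuous_subtype_val

lemma isClopen_stoneClopen (b : B) : IsClopen (stoneClopen (B := B) b) := by
  have : stoneClopen (B := B) b = (fun h : StoneSpace B => h.1 b) ⁻¹' {true} := rfl
  rw [this]
  exact (isClopen_discrete ({true} : Set Bool)).preimage (continuous_stone_apply b)

instance : CompactSpace (StoneSpace B) := by
  have hclosed : IsClosed {f : B → Bool | f ⊤ = true ∧ f ⊥ = false ∧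
      (∀ a b, f (a ⊔ b) = (f a || f b)) ∧ (∀ a b, f (a ⊓ b) = (f a && f b))} := by
    have heq : {f : B → Bool | f ⊤ = true ∧ f ⊥ = false ∧
        (∀ a b, f (a ⊔ b) = (f a || f b)) ∧ (∀ a b, f (a ⊓ b) = (f a && f b))} =
        ({f : B → Bool | f ⊤ = true} ∩ {f : B → Bool | f ⊥ = false} ∩
          (⋂ (a : B) (b : B), {f : B → Bool | f (a ⊔ b) = (f a || f b)}) ∩
          ⋂ (a : B) (b : B), {f : B → Bool | f (a ⊓ b) = (f a && f b)}) := by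
      ext f
      simp only [Set.mem_setOf_eq, Set.mem_inter_iff, Set.mem_iInter]
      tauto
    rw [heq]
    refine (((isClosed_eq (continuous_apply ⊤) continuous_const).inter
      (isClosed_eq (continuous_apply ⊥) continuous_const)).inter ?_).inter ?_
    · refine isClosed_iInter fun a => isClosed_iInter fun b => ?_
      have hc : Continuous (fun p : Bool × Bool => p.1 || p.2) := continuous_of_discreteTopology
      exact isClosed_eq (continuous_apply (a ⊔ b))
        (hc.comp (f := fun f : B → Bool => (f a, f b)) ((continuous_apply a).prodMk (continuous_apply b)))
    · refine isClosed_iInter fun a => isClosed_iInter fun b => ?_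
      have hc : Continuous (fun p : Bool × Bool => p.1 && p.2) := continuous_of_discreteTopology
      exact isClosed_eq (continuous_apply (a ⊓ b))
        (hc.comp (f := fun f : B → Bool => (f a, f b)) ((continuous_apply a).prodMk (continuous_apply b)))
  exact show CompactSpace (Subtype _) from isCompact_iff_compactSpace.mp hclosed.isCompact

instance : T2Space (StoneSpace B) :=
  show T2Space {f : B → Bool // _} from inferInstance

instance [Countable B] : TopologicalSpace.PseudoMetrizableSpace (StoneSpace B) := by
  haveI : TopologicalSpace.MetrizableSpace (B → Bool) :=
    TopologicalSpace.metrizableSpace_of_t3_secondCountable _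
  haveI : TopologicalSpace.MetrizableSpace (StoneSpace B) :=
    show TopologicalSpace.MetrizableSpace {f : B → Bool // _} from
      Topology.IsEmbedding.subtypeVal.metrizableSpace
  infer_instance

end StoneBasics

section StoneBasis

open TopologicalSpace MeasureTheory

variable {B : Type*} [BooleanAlgebra B]

lemma exists_stoneClopen_between {K G : Set (StoneSpace B)} (hK : IsCompact K)
    (hG : IsOpen G) (hKG : K ⊆ G) :
    ∃ b : B, K ⊆ stoneClopen b ∧ stoneClopen b ⊆ G := by
  classical
  -- first, a basis fact: every point of an open set lies in a clopen inside it
  have basis : ∀ x ∈ G, ∃ b : B, x ∈ stoneClopen b ∧ stoneClopen b ⊆ G := by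
    intro x hx
    obtain ⟨V, hV, rfl⟩ := isOpen_induced_iff.mp hG
    obtain ⟨I, u, hu, hsub⟩ := isOpen_pi_iff.mp hV x.1 hx
    refine ⟨I.inf (fun a => if x.1 a = true then a else aᶜ), ?_, ?_⟩
    · rw [stoneClopen_finsetInf]
      refine Set.mem_iInter₂.mpr fun a ha => ?_
      by_cases hxa : x.1 a = true
      · simp [mem_stoneClopen, hxa]
      · have hxa' : x.1 a = false := by simpa using hxa
        simp [mem_stoneClopen, hxa', StoneSpace.compl_apply]
    · intro h hh
      rw [stoneClopen_finsetInf] at hh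
      have hmem := Set.mem_iInter₂.mp hh
      refine hsub ?_
      intro a ha
      have hthis := hmem a ha
      by_cases hxa : x.1 a = true
      · simp only [hxa, if_true, mem_stoneClopen] at hthis
        rw [hthis, ← hxa]
        exact (hu a ha).2
      · have hxa' : x.1 a = false := by simpa using hxa
        rw [if_neg hxa] at hthis
        rw [mem_stoneClopen, StoneSpace.compl_apply] at hthis
        have hha : h.1 a = false := by simpa using hthis
        rw [hha, ← hxa']
        exact (hu a ha).2
  choose f hf1 hf2 using basis
  obtain ⟨t, ht⟩ := hK.elim_finite_subcover (fun x : K => stoneClopen (f x.1 (hKG x.2)))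
    (fun x => (isClopen_stoneClopen _).isOpen)
    (fun x hx => Set.mem_iUnion.mpr ⟨⟨x, hx⟩, hf1 _ _⟩)
  refine ⟨t.sup (fun x => f x.1 (hKG x.2)), ?_, ?_⟩
  · rw [stoneClopen_finsetSup]
    exact ht
  · rw [stoneClopen_finsetSup]
    exact Set.iUnion₂_subset fun x _ => hf2 _ _

lemma exists_stoneClopen_separating {K₁ K₂ : Set (StoneSpace B)} (h₁ : IsCompact K₁)
    (h₂ : IsClosed K₂) (hd : Disjoint K₁ K₂) :
    ∃ b : B, K₁ ⊆ stoneClopen b ∧ Disjoint (stoneClopen b) K₂ := by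
  obtain ⟨b, hb1, hb2⟩ := exists_stoneClopen_between h₁ h₂.isOpen_compl
    hd.subset_compl_right
  exact ⟨b, hb1, Set.subset_compl_iff_disjoint_right.mp hb2⟩

end StoneBasis

section LimitContent

open TopologicalSpace MeasureTheory
open scoped ENNReal NNReal

variable {B : Type*} [BooleanAlgebra B] (c : B → ℝ≥0∞)

/-- the inner "content" associated to a premeasure on the clopen sets -/
noncomputable def stoneContentFun (K : Compacts (StoneSpace B)) : ℝ≥0∞ :=
  ⨅ b : {b : B // (K : Set (StoneSpace B)) ⊆ stoneClopen b}, c b.1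

instance (K : Compacts (StoneSpace B)) :
    Nonempty {b : B // (K : Set (StoneSpace B)) ⊆ stoneClopen b} :=
  ⟨⟨⊤, by simp⟩⟩

variable {c}

lemma stoneContentFun_le {K : Compacts (StoneSpace B)} {b : B}
    (h : (K : Set (StoneSpace B)) ⊆ stoneClopen b) : stoneContentFun c K ≤ c b :=
  iInf_le _ (⟨b, h⟩ : {b : B // (K : Set (StoneSpace B)) ⊆ stoneClopen b})

lemma stoneContentFun_le_one (hone : c ⊤ = 1) (K : Compacts (StoneSpace B)) : stoneContentFun c K ≤ 1 :=
  le_trans (stoneContentFun_le (by simp)) (le_of_eq hone)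

lemma stoneContentFun_mono {K₁ K₂ : Compacts (StoneSpace B)}
    (h : (K₁ : Set (StoneSpace B)) ⊆ K₂) : stoneContentFun c K₁ ≤ stoneContentFun c K₂ :=
  le_iInf fun b => stoneContentFun_le (h.trans b.2)

lemma c_sup_le (hmono : ∀ a b : B, stoneClopen a ⊆ stoneClopen b → c a ≤ c b)
    (hadd : ∀ a b : B, Disjoint (stoneClopen (B := B) a) (stoneClopen b) →
      c (a ⊔ b) = c a + c b) (a b : B) : c (a ⊔ b) ≤ c a + c b := by
  have key : c (a ⊔ b) = c a + c (b ⊓ aᶜ) := by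
    have h1 : a ⊔ b = a ⊔ b ⊓ aᶜ := by
      rw [sup_inf_left, sup_compl_eq_top, inf_top_eq]
    rw [h1, hadd]
    rw [stoneClopen_inf, stoneClopen_compl]
    exact Set.disjoint_left.mpr fun x hx hx' => hx'.2 hx
  rw [key]
  exact add_le_add le_rfl (hmono _ _ (by rw [stoneClopen_inf]; exact Set.inter_subset_left))

lemma stoneContentFun_sup_le (hmono : ∀ a b : B, stoneClopen a ⊆ stoneClopen b → c a ≤ c b)
    (hadd : ∀ a b : B, Disjoint (stoneClopen (B := B) a) (stoneClopen b) →
      c (a ⊔ b) = c a + c b) (K₁ K₂ : Compacts (StoneSpace B)) :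
    stoneContentFun c (K₁ ⊔ K₂) ≤ stoneContentFun c K₁ + stoneContentFun c K₂ := by
  rw [stoneContentFun, stoneContentFun, ENNReal.iInf_add, stoneContentFun]
  refine le_iInf fun b₁ => ?_
  rw [ENNReal.add_iInf]
  refine le_iInf fun b₂ => ?_
  refine le_trans (stoneContentFun_le (b := b₁.1 ⊔ b₂.1) ?_) (c_sup_le hmono hadd _ _)
  rw [stoneClopen_sup]
  exact Set.union_subset (b₁.2.trans Set.subset_union_left) (b₂.2.trans Set.subset_union_right)

lemma stoneContentFun_sup_disjoint (hmono : ∀ a b : B, stoneClopen a ⊆ stoneClopen b → c a ≤ c b)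
    (hadd : ∀ a b : B, Disjoint (stoneClopen (B := B) a) (stoneClopen b) →
      c (a ⊔ b) = c a + c b) (K₁ K₂ : Compacts (StoneSpace B))
    (hd : Disjoint (K₁ : Set (StoneSpace B)) K₂) :
    stoneContentFun c (K₁ ⊔ K₂) = stoneContentFun c K₁ + stoneContentFun c K₂ := by
  refine le_antisymm (stoneContentFun_sup_le hmono hadd K₁ K₂) ?_
  obtain ⟨b, hb1, hb2⟩ := exists_stoneClopen_separating K₁.isCompact
    (K₂.isCompact.isClosed) hd
  refine le_iInf fun b' => ?_
  have hsplit : b'.1 ⊓ b ⊔ b'.1 ⊓ bᶜ = b'.1 := by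
    rw [← inf_sup_left, sup_compl_eq_top, inf_top_eq]
  have hKb' : (K₁ : Set (StoneSpace B)) ∪ K₂ ⊆ stoneClopen b'.1 := by
    intro x hx
    exact b'.2 (by rw [Compacts.coe_sup]; exact hx)
  have h1 : (K₁ : Set (StoneSpace B)) ⊆ stoneClopen (b'.1 ⊓ b) := by
    rw [stoneClopen_inf]
    exact Set.subset_inter ((Set.subset_union_left).trans hKb') hb1
  have h2 : (K₂ : Set (StoneSpace B)) ⊆ stoneClopen (b'.1 ⊓ bᶜ) := by
    rw [stoneClopen_inf, stoneClopen_compl]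
    exact Set.subset_inter ((Set.subset_union_right).trans hKb')
      hb2.subset_compl_left
  have hdisj : Disjoint (stoneClopen (B := B) (b'.1 ⊓ b)) (stoneClopen (b'.1 ⊓ bᶜ)) := by
    rw [stoneClopen_inf, stoneClopen_inf, stoneClopen_compl]
    exact Set.disjoint_left.mpr fun x hx hx' => hx'.2 hx.2
  calc stoneContentFun c K₁ + stoneContentFun c K₂
      ≤ c (b'.1 ⊓ b) + c (b'.1 ⊓ bᶜ) :=
        add_le_add (stoneContentFun_le h1) (stoneContentFun_le h2)
    _ = c (b'.1 ⊓ b ⊔ b'.1 ⊓ bᶜ) := (hadd _ _ hdisj).symm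
    _ = c b'.1 := congrArg c hsplit

lemma stoneContentFun_ne_top (hone : c ⊤ = 1) (K : Compacts (StoneSpace B)) : stoneContentFun c K ≠ ⊤ :=
  ne_top_of_le_ne_top (by simp) (stoneContentFun_le_one hone K)

/-- the content on compact subsets of the Stone space induced by a finitely additive
probability premeasure on the clopen sets -/
noncomputable def stoneContent (hone : c ⊤ = 1)
    (hmono : ∀ a b : B, stoneClopen a ⊆ stoneClopen b → c a ≤ c b)
    (hadd : ∀ a b : B, Disjoint (stoneClopen (B := B) a) (stoneClopen b) →
      c (a ⊔ b) = c a + c b) : Content (StoneSpace B) where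
  toFun K := (stoneContentFun c K).toNNReal
  mono' K₁ K₂ h := ENNReal.toNNReal_mono (stoneContentFun_ne_top hone _)
    (stoneContentFun_mono h)
  sup_disjoint' K₁ K₂ hd _ _ := by
    simp only [stoneContentFun_sup_disjoint hmono hadd K₁ K₂ hd]
    rw [ENNReal.toNNReal_add (stoneContentFun_ne_top hone _)
      (stoneContentFun_ne_top hone _)]
  sup_le' K₁ K₂ := by
    have h := stoneContentFun_sup_le hmono hadd K₁ K₂
    have := ENNReal.toNNReal_mono
      (by exact ENNReal.add_ne_top.mpr ⟨stoneContentFun_ne_top hone _,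
        stoneContentFun_ne_top hone _⟩) h
    rwa [ENNReal.toNNReal_add (stoneContentFun_ne_top hone _)
      (stoneContentFun_ne_top hone _)] at this

lemma stoneContent_apply (hone : c ⊤ = 1)
    (hmono : ∀ a b : B, stoneClopen a ⊆ stoneClopen b → c a ≤ c b)
    (hadd : ∀ a b : B, Disjoint (stoneClopen (B := B) a) (stoneClopen b) →
      c (a ⊔ b) = c a + c b) (K : Compacts (StoneSpace B)) :
    (stoneContent hone hmono hadd K : ℝ≥0∞) = stoneContentFun c K := by
  simp only [stoneContent, Content.mk_apply]
  exact ENNReal.coe_toNNReal (stoneContentFun_ne_top hone K)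

lemma stoneContentFun_stoneClopen
    (hmono : ∀ a b : B, stoneClopen a ⊆ stoneClopen b → c a ≤ c b) (b : B) (hKc : IsCompact (stoneClopen (B := B) b)) :
    stoneContentFun c ⟨stoneClopen b, hKc⟩ = c b := by
  refine le_antisymm (stoneContentFun_le subset_rfl) (le_iInf fun b' => hmono _ _ b'.2)

end LimitContent

section StoneMeasure

open TopologicalSpace MeasureTheory
open scoped ENNReal NNReal

variable {B : Type*} [BooleanAlgebra B] {c : B → ℝ≥0∞}
variable (hone : c ⊤ = 1)
variable (hmono : ∀ a b : B, stoneClopen a ⊆ stoneClopen b → c a ≤ c b)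
variable (hadd : ∀ a b : B, Disjoint (stoneClopen (B := B) a) (stoneClopen b) →
  c (a ⊔ b) = c a + c b)

lemma stoneContent_measure_stoneClopen (b : B) :
    (stoneContent hone hmono hadd).measure (stoneClopen b) = c b := by
  have hco := isClopen_stoneClopen (B := B) b
  have hKc : IsCompact (stoneClopen (B := B) b) := hco.isClosed.isCompact
  rw [Content.measure_apply _ hco.isOpen.measurableSet,
    Content.outerMeasure_of_isOpen _ _ hco.isOpen]
  refine le_antisymm ?_ ?_
  · refine iSup_le fun K => iSup_le fun hK => ?_
    rw [stoneContent_apply]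
    exact stoneContentFun_le hK
  · refine le_trans ?_ (Content.le_innerContent _ ⟨stoneClopen b, hKc⟩ _ subset_rfl)
    rw [stoneContent_apply hone hmono hadd, stoneContentFun_stoneClopen hmono]

lemma stoneContent_measure_isProbability :
    IsProbabilityMeasure (stoneContent hone hmono hadd).measure := by
  constructor
  have := stoneContent_measure_stoneClopen hone hmono hadd (⊤ : B)
  rwa [stoneClopen_top, hone] at this

lemma stoneContent_measure_open_le (m : ℕ → Measure (StoneSpace B))
    (hc : ∀ b : B, Tendsto (fun n => m n (stoneClopen b)) atTop (𝓝 (c b)))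
    {G : Set (StoneSpace B)} (hG : IsOpen G) :
    (stoneContent hone hmono hadd).measure G ≤ atTop.liminf (fun n => m n G) := by
  rw [Content.measure_apply _ hG.measurableSet, Content.outerMeasure_of_isOpen _ _ hG]
  refine iSup_le fun K => iSup_le fun hKG => ?_
  obtain ⟨b, hKb, hbG⟩ := exists_stoneClopen_between K.isCompact hG hKG
  have h1 : (stoneContent hone hmono hadd) K ≤ c b := by
    rw [stoneContent_apply]
    exact stoneContentFun_le hKb
  refine h1.trans ?_
  rw [← (hc b).liminf_eq]
  exact liminf_le_liminf (Filter.Eventually.of_forall fun n => measure_mono hbG)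

end StoneMeasure

section FormulaReduction

open FirstOrder

lemma exists_finFormula_logEquiv (L : FirstOrder.Language) (ψ : L.Formula ℕ) :
    ∃ (p : ℕ) (φ : L.Formula (Fin p)),
      LogEquiv (φ.relabel (Fin.val : Fin p → ℕ)) ψ := by
  classical
  have hsub : ↑ψ.freeVarFinset ⊆ (↑ψ.freeVarFinset : Set ℕ) := subset_rfl
  set p := ψ.freeVarFinset.sup id + 1 with hp
  have hlt : ∀ x ∈ ψ.freeVarFinset, x < p := fun x hx =>
    Nat.lt_succ_of_le (Finset.le_sup (f := id) hx)
  let g : (↑ψ.freeVarFinset : Set ℕ) → Fin p := fun x =>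
    ⟨x.1, hlt x.1 (Finset.mem_coe.mp x.2)⟩
  refine ⟨p, Language.Formula.relabel g (ψ.restrictFreeVar (Set.inclusion hsub)), ?_⟩
  intro M _ v
  rw [Language.Formula.realize_relabel, Language.Formula.realize_relabel]
  exact Language.BoundedFormula.realize_restrictFreeVar' hsub

end FormulaReduction

open MeasureTheory
open scoped ENNReal NNReal

/-- a sequence of finite structures is FO-convergent iff the associated
measures on the Stone space of the Lindenbaum–Tarski algebra converge weakly; in that case
the limit measure of K([φ]) equals the limit of the Stone pairings ⟨φ,A_n⟩. -/
theorem stmt3 (L : FirstOrder.Language) [Countable L.Symbols]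
    (B : Type) [BooleanAlgebra B] [Countable B]
    (q : L.Formula ℕ → B) (hq : IsLindenbaumTarski L B q)
    (A : ℕ → Type) [∀ n, L.Structure (A n)] [∀ n, Finite (A n)] [∀ n, Nonempty (A n)]
    (μ : ℕ → MeasureTheory.ProbabilityMeasure (StoneSpace B))
    (hμ : ∀ (n : ℕ) (p : ℕ) (φ : L.Formula (Fin p)),
      ((μ n : MeasureTheory.Measure (StoneSpace B))
        (stoneClopen (q (φ.relabel (Fin.val : Fin p → ℕ))))).toReal
        = stonePairing L (A n) φ) :
    ((∀ (p : ℕ) (φ : L.Formula (Fin p)),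
        ∃ r : ℝ, Tendsto (fun n => stonePairing L (A n) φ) atTop (𝓝 r)) ↔
      ∃ ν : MeasureTheory.ProbabilityMeasure (StoneSpace B), WeaklyConvergesTo μ ν) ∧
    ∀ ν : MeasureTheory.ProbabilityMeasure (StoneSpace B), WeaklyConvergesTo μ ν →
      ∀ (p : ℕ) (φ : L.Formula (Fin p)),
        Tendsto (fun n => stonePairing L (A n) φ) atTop
          (𝓝 (((ν : MeasureTheory.Measure (StoneSpace B))
            (stoneClopen (q (φ.relabel (Fin.val : Fin p → ℕ))))).toReal)) := by
  classical
  have part2 : ∀ ν : MeasureTheory.ProbabilityMeasure (StoneSpace B), WeaklyConvergesTo μ ν →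
      ∀ (p : ℕ) (φ : L.Formula (Fin p)),
        Tendsto (fun n => stonePairing L (A n) φ) atTop
          (𝓝 (((ν : MeasureTheory.Measure (StoneSpace B))
            (stoneClopen (q (φ.relabel (Fin.val : Fin p → ℕ))))).toReal)) := by
    intro ν hν p φ
    have htend : Tendsto μ atTop (𝓝 ν) :=
      ProbabilityMeasure.tendsto_iff_forall_integral_tendsto.mpr hν
    have hclopen := isClopen_stoneClopen (B := B) (q (φ.relabel (Fin.val : Fin p → ℕ)))
    have h_closeds : ∀ F, IsClosed F →
        (atTop.limsup fun n => (μ n : Measure (StoneSpace B)) F)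
          ≤ (ν : Measure (StoneSpace B)) F :=
      fun F hF => ProbabilityMeasure.limsup_measure_closed_le_of_tendsto htend hF
    have h_opens : ∀ G, IsOpen G → (ν : Measure (StoneSpace B)) G ≤
        atTop.liminf fun n => (μ n : Measure (StoneSpace B)) G := fun G hG =>
      MeasureTheory.le_measure_liminf_of_limsup_measure_compl_le hG.measurableSet
        (h_closeds _ (isClosed_compl_iff.mpr hG))
    have hnull : (ν : Measure (StoneSpace B))
        (frontier (stoneClopen (q (φ.relabel (Fin.val : Fin p → ℕ))))) = 0 := by
      rw [hclopen.frontier_eq]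
      simp
    have key := MeasureTheory.tendsto_measure_of_null_frontier h_opens hnull
    have key2 : Tendsto (fun n => ((μ n : Measure (StoneSpace B))
          (stoneClopen (q (φ.relabel (Fin.val : Fin p → ℕ))))).toReal)
        atTop (𝓝 (((ν : Measure (StoneSpace B))
          (stoneClopen (q (φ.relabel (Fin.val : Fin p → ℕ))))).toReal)) :=
      (ENNReal.tendsto_toReal (measure_ne_top _ _)).comp key
    exact key2.congr fun n => hμ n p φ
  refine ⟨⟨fun hconv => ?_, fun hex p φ => ?_⟩, part2⟩
  swap
  · obtain ⟨ν, hν⟩ := hex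
    exact ⟨_, part2 ν hν p φ⟩
  -- forward direction: construct the limit measure
  have hcb : ∀ b : B, ∃ r : ℝ≥0∞, Tendsto
      (fun n => (μ n : Measure (StoneSpace B)) (stoneClopen b)) atTop (𝓝 r) := by
    intro b
    obtain ⟨ψ, hψ⟩ := hq.surj b
    obtain ⟨p, φ, hφ⟩ := exists_finFormula_logEquiv L ψ
    have hqφ : q (φ.relabel (Fin.val : Fin p → ℕ)) = b := by
      rw [← hψ]; exact (hq.eq_iff _ _).mpr hφ
    obtain ⟨r, hr⟩ := hconv p φ
    have hr' : Tendsto (fun n => ((μ n : Measure (StoneSpace B))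
        (stoneClopen b)).toReal) atTop (𝓝 r) := by
      refine hr.congr fun n => ?_
      rw [← hμ n p φ, hqφ]
    refine ⟨ENNReal.ofReal r, ?_⟩
    exact (ENNReal.tendsto_ofReal hr').congr fun n =>
      ENNReal.ofReal_toReal (measure_ne_top _ _)
  choose c hc using hcb
  have hone : c ⊤ = 1 := by
    refine tendsto_nhds_unique (hc ⊤) ?_
    have heq : (fun n => (μ n : Measure (StoneSpace B)) (stoneClopen (⊤ : B)))
        = fun _ => (1 : ℝ≥0∞) := by
      funext n; rw [stoneClopen_top]; exact measure_univ
    rw [heq]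
    exact tendsto_const_nhds
  have hmono : ∀ a b : B, stoneClopen a ⊆ stoneClopen b → c a ≤ c b := fun a b hab =>
    le_of_tendsto_of_tendsto' (hc a) (hc b) fun n => measure_mono hab
  have hadd : ∀ a b : B, Disjoint (stoneClopen (B := B) a) (stoneClopen b) →
      c (a ⊔ b) = c a + c b := by
    intro a b hd
    refine tendsto_nhds_unique (hc (a ⊔ b)) ?_
    have heq : ∀ n, (μ n : Measure (StoneSpace B)) (stoneClopen (a ⊔ b)) =
        (μ n : Measure (StoneSpace B)) (stoneClopen a) +
          (μ n : Measure (StoneSpace B)) (stoneClopen b) := by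
      intro n
      rw [stoneClopen_sup]
      exact measure_union hd (isClopen_stoneClopen b).isOpen.measurableSet
    exact ((hc a).add (hc b)).congr fun n => (heq n).symm
  haveI hprob := stoneContent_measure_isProbability hone hmono hadd
  set ν : MeasureTheory.ProbabilityMeasure (StoneSpace B) :=
    ⟨(stoneContent hone hmono hadd).measure, hprob⟩ with hν
  refine ⟨ν, ?_⟩
  have h_opens' : ∀ G : Set (StoneSpace B), IsOpen G → (ν : Measure (StoneSpace B)) G ≤
      atTop.liminf (fun n => (μ n : Measure (StoneSpace B)) G) := fun G hG =>
    stoneContent_measure_open_le hone hmono hadd (fun n => (μ n : Measure (StoneSpace B))) hc hG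
  have h_opensNN : ∀ G : Set (StoneSpace B), IsOpen G →
      ν G ≤ atTop.liminf (fun n => μ n G) := by
    intro G hG
    have aux : (ENNReal.ofNNReal (atTop.liminf (fun n => μ n G))) =
        atTop.liminf (fun n => ((μ n G : ℝ≥0) : ℝ≥0∞)) := by
      refine Monotone.map_liminf_of_continuousAt (F := atTop) ENNReal.coe_mono
        (fun n => μ n G) ?_ ?_ ?_
      · exact ENNReal.continuous_coe.continuousAt
      · exact Filter.IsBoundedUnder.isCoboundedUnder_ge ⟨1, by simp⟩
      · exact ⟨0, by simp⟩
    rw [← ENNReal.coe_le_coe, ProbabilityMeasure.ennreal_coeFn_eq_coeFn_toMeasure, aux]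
    simpa only [ProbabilityMeasure.ennreal_coeFn_eq_coeFn_toMeasure] using h_opens' G hG
  exact ProbabilityMeasure.tendsto_iff_forall_integral_tendsto.mp
    (MeasureTheory.tendsto_of_forall_isOpen_le_liminf h_opensNN)
end

section
/- For every first-order sentence θ over a countable relational language L there exist integers r, m and a local first-order formula φ(x) with a single free variable such that for every finite vertex-transitive L-structure A containing at least m elements pairwise at Gaifman distance greater than 2r, the following are equivalent: A ⊨ θ; A ⊨ ∃x φ(x); A ⊨ ∀x φ(x); ⟨φ,A⟩ = 1. -/
open FirstOrder Filter Topology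

/-- Gaifman graph -/
def gaifmanGraph (L : FirstOrder.Language) (A : Type*) [L.Structure A] : SimpleGraph A where
  Adj a b := a ≠ b ∧ ∃ (n : ℕ) (r : L.Relations n) (t : Fin n → A),
    Language.Structure.RelMap r t ∧ (∃ i, t i = a) ∧ (∃ j, t j = b)
  symm := by
    constructor
    rintro a b ⟨hne, n, r, t, hr, hi, hj⟩
    exact ⟨hne.symm, n, r, t, hr, hj, hi⟩
  loopless := by
    constructor
    rintro a ⟨hne, -⟩
    exact hne rfl

/-- ball of radius t around range of v in Gaifman graph -/
def ballSet (L : FirstOrder.Language) {A : Type*} [L.Structure A] {p : ℕ}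
    (v : Fin p → A) (t : ℕ) : Set A :=
  {a | ∃ (i : Fin p) (w : (gaifmanGraph L A).Walk (v i) a), w.length ≤ t}

lemma mem_ballSet_self (L : FirstOrder.Language) {A : Type*} [L.Structure A] {p : ℕ}
    (v : Fin p → A) (t : ℕ) (i : Fin p) : v i ∈ ballSet L v t :=
  ⟨i, SimpleGraph.Walk.nil, Nat.zero_le t⟩

/-- induced structure on a subset, for a relational language -/
def inducedStructure (L : FirstOrder.Language) [L.IsRelational] {A : Type*} [L.Structure A]
    (s : Set A) : L.Structure s where
  funMap := fun f => isEmptyElim f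
  RelMap := fun r x => Language.Structure.RelMap r (fun i => (x i : A))

/-- t-locality -/
def IsTLocal (L : FirstOrder.Language) [L.IsRelational] {p : ℕ} (φ : L.Formula (Fin p))
    (t : ℕ) : Prop :=
  ∀ (A : Type) [L.Structure A] (v : Fin p → A),
    (φ.Realize v ↔
      (letI := inducedStructure L (ballSet L v t)
       φ.Realize (fun i => (⟨v i, mem_ballSet_self L v t i⟩ : ballSet L v t))))

def IsLocal (L : FirstOrder.Language) [L.IsRelational] {p : ℕ} (φ : L.Formula (Fin p)) : Prop :=
  ∃ t, IsTLocal L φ t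

def VertexTransitive (L : FirstOrder.Language) (A : Type*) [L.Structure A] : Prop :=
  ∀ a b : A, ∃ e : A ≃[L] A, e a = b

/-- no walk of length at most d joins a and b (i.e. Gaifman distance > d) -/
def FarApart (L : FirstOrder.Language) {A : Type*} [L.Structure A] (a b : A) (d : ℕ) : Prop :=
  ¬ ∃ w : (gaifmanGraph L A).Walk a b, w.length ≤ d


set_option linter.unusedSectionVars false

namespace Stmt6Aux

open FirstOrder.Language FirstOrder.Language.BoundedFormula

variable {L : FirstOrder.Language} [L.IsRelational]

/-- index of the (necessarily variable, necessarily `inr`) term -/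
def varIdx : ∀ {k : ℕ}, L.Term (Empty ⊕ Fin k) → Fin k
  | _, .var (.inl e) => e.elim
  | _, .var (.inr i) => i
  | _, .func f _ => isEmptyElim f

lemma realize_varIdx {A : Type*} [L.Structure A] {k : ℕ} (t : L.Term (Empty ⊕ Fin k))
    (v : Fin k → A) : t.realize (Sum.elim Empty.elim v) = v (varIdx t) := by
  match t with
  | .var (.inl e) => exact e.elim
  | .var (.inr i) => rfl
  | .func f _ => exact isEmptyElim f

/-- adjacency via a relation from the list `l` -/
def Adj0 (l : List (Σ n, L.Relations n)) {A : Type*} [L.Structure A] (x y : A) : Prop :=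
  ∃ R ∈ l, ∃ t : Fin R.1 → A, Structure.RelMap R.2 t ∧ (∃ i, t i = x) ∧ (∃ j, t j = y)

/-- there is a chain of length at most `d` of `l`-adjacencies from `x` to `y` -/
def CloseTo (l : List (Σ n, L.Relations n)) {A : Type*} [L.Structure A] :
    ℕ → A → A → Prop
  | 0, x, y => x = y
  | (d+1), x, y => CloseTo l d x y ∨ ∃ z, Adj0 l x z ∧ CloseTo l d z y

variable {l : List (Σ n, L.Relations n)} {A : Type*} [L.Structure A]

lemma Adj0.symm {x y : A} (h : Adj0 l x y) : Adj0 l y x := by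
  obtain ⟨R, hR, t, ht, hi, hj⟩ := h
  exact ⟨R, hR, t, ht, hj, hi⟩

lemma closeTo_refl (d : ℕ) (x : A) : CloseTo l d x x := by
  induction d with
  | zero => rfl
  | succ d ih => exact Or.inl ih

lemma CloseTo.mono {d d' : ℕ} (h : d ≤ d') {x y : A} (hc : CloseTo l d x y) :
    CloseTo l d' x y := by
  induction d' with
  | zero => exact Nat.le_zero.1 h ▸ hc
  | succ d' ih =>
    rcases Nat.lt_or_ge d (d' + 1) with h' | h'
    · exact Or.inl (ih (Nat.lt_succ_iff.1 h'))
    · have : d = d' + 1 := le_antisymm h h'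
      exact this ▸ hc

lemma CloseTo.trans {d₁ d₂ : ℕ} {x y z : A} (h₁ : CloseTo l d₁ x y)
    (h₂ : CloseTo l d₂ y z) : CloseTo l (d₁ + d₂) x z := by
  induction d₁ generalizing x with
  | zero => exact h₁ ▸ h₂.mono (by omega)
  | succ d ih =>
    rcases h₁ with h₁ | ⟨w, hw, hc⟩
    · exact (ih h₁).mono (by omega)
    · exact (show d + 1 + d₂ = (d + d₂) + 1 by omega) ▸ Or.inr ⟨w, hw, ih hc⟩

lemma CloseTo.step_right {d : ℕ} {x y z : A} (h : CloseTo l d x y) (ha : Adj0 l y z) :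
    CloseTo l (d + 1) x z := by
  induction d generalizing x with
  | zero => exact h ▸ Or.inr ⟨z, ha, closeTo_refl 0 z⟩
  | succ d ih =>
    rcases h with h | ⟨w, hw, hc⟩
    · exact Or.inl (ih h)
    · exact Or.inr ⟨w, hw, ih hc⟩

lemma CloseTo.symm {d : ℕ} {x y : A} (h : CloseTo l d x y) : CloseTo l d y x := by
  induction d generalizing x y with
  | zero =>
    have h' : x = y := h
    subst h'
    exact rfl
  | succ d ih =>
    rcases h with h | ⟨z, hz, hc⟩
    · exact Or.inl (ih h)
    · exact (ih hc).step_right hz.symm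

lemma Adj0.map (e : A ≃[L] A) {x y : A} (h : Adj0 l x y) : Adj0 l (e x) (e y) := by
  obtain ⟨R, hR, t, ht, ⟨i, hi⟩, ⟨j, hj⟩⟩ := h
  exact ⟨R, hR, e ∘ t, (e.map_rel R.2 t).2 ht, ⟨i, by simp [hi]⟩, ⟨j, by simp [hj]⟩⟩

lemma CloseTo.map (e : A ≃[L] A) {d : ℕ} {x y : A} (h : CloseTo l d x y) :
    CloseTo l d (e x) (e y) := by
  induction d generalizing x with
  | zero => exact congrArg e h
  | succ d ih =>
    rcases h with h | ⟨z, hz, hc⟩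
    · exact Or.inl (ih h)
    · exact Or.inr ⟨e z, hz.map e, ih hc⟩

lemma CloseTo.toWalk {d : ℕ} {x y : A} (h : CloseTo l d x y) :
    ∃ w : (gaifmanGraph L A).Walk x y, w.length ≤ d := by
  induction d generalizing x with
  | zero => exact h ▸ ⟨SimpleGraph.Walk.nil, le_rfl⟩
  | succ d ih =>
    rcases h with h | ⟨z, hz, hc⟩
    · obtain ⟨w, hw⟩ := ih h
      exact ⟨w, hw.trans (Nat.le_succ d)⟩
    · obtain ⟨w, hw⟩ := ih hc
      by_cases hxz : x = z
      · subst hxz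
        exact ⟨w, by omega⟩
      · obtain ⟨R, hR, t, ht, hi, hj⟩ := hz
        exact ⟨SimpleGraph.Walk.cons ⟨hxz, R.1, R.2, t, ht, hi, hj⟩ w, Nat.succ_le_succ hw⟩

/-- not `CloseTo` transfers along automorphisms too -/
lemma not_closeTo_map (e : A ≃[L] A) {d : ℕ} {x y : A} (h : ¬ CloseTo l d x y) :
    ¬ CloseTo l d (e x) (e y) := fun hc => h (by simpa using hc.map e.symm)

end Stmt6Aux

namespace Stmt6Aux

open FirstOrder FirstOrder.Language FirstOrder.Language.BoundedFormula

variable {L : FirstOrder.Language} [L.IsRelational]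

/-- existential quantification over a block of `m` fresh variables -/
def exN : ∀ (m : ℕ) {α : Type} {n : ℕ}, L.BoundedFormula α (n + m) → L.BoundedFormula α n
  | 0, _, _, ψ => ψ
  | (m+1), _, _, ψ => exN m ψ.ex

lemma realize_exN {A : Type*} [L.Structure A] :
    ∀ (m : ℕ) {α : Type} {n : ℕ} (ψ : L.BoundedFormula α (n + m)) (x : α → A)
      (v : Fin n → A),
      (exN m ψ).Realize x v ↔ ∃ w : Fin m → A, ψ.Realize x (Fin.append v w)
  | 0, _, _, ψ, x, v => by
    constructor
    · intro h
      refine ⟨Fin.elim0, ?_⟩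
      rwa [Fin.append_elim0]
    · rintro ⟨w, h⟩
      rwa [Subsingleton.elim w Fin.elim0, Fin.append_elim0] at h
  | (m+1), _, _, ψ, x, v => by
    rw [exN, realize_exN m ψ.ex x v]
    constructor
    · rintro ⟨w, h⟩
      rw [realize_ex] at h
      obtain ⟨y, h⟩ := h
      exact ⟨Fin.snoc w y, by rwa [Fin.append_snoc]⟩
    · rintro ⟨w, h⟩
      refine ⟨Fin.init w, ?_⟩
      rw [realize_ex]
      refine ⟨w (Fin.last m), ?_⟩
      rwa [← Fin.append_snoc, Fin.snoc_init_self]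

variable {α : Type}

/-- lift free/bound variable indices under a new block of `m` bound variables -/
def liftA {n : ℕ} (m : ℕ) (s : α ⊕ Fin n) : α ⊕ Fin (n + m) := Sum.map id (Fin.castAdd m) s

/-- lift under one new bound variable -/
def lift1 {n : ℕ} (s : α ⊕ Fin n) : α ⊕ Fin (n + 1) := Sum.map id Fin.castSucc s

/-- formula: some relation in `l` relates (the values of) `s` and `u` -/
def adjF (l : List (Σ n, L.Relations n)) {n : ℕ} (s u : α ⊕ Fin n) : L.BoundedFormula α n :=
  (l.map fun R => exN R.1 <|
      (R.2.boundedFormula fun i => Term.var (Sum.inr (Fin.natAdd n i))) ⊓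
      ((List.finRange R.1).map fun i =>
          Term.bdEqual (Term.var (Sum.inr (Fin.natAdd n i))) (Term.var (liftA R.1 s))).foldr
        (· ⊔ ·) ⊥ ⊓
      ((List.finRange R.1).map fun j =>
          Term.bdEqual (Term.var (Sum.inr (Fin.natAdd n j))) (Term.var (liftA R.1 u))).foldr
        (· ⊔ ·) ⊥).foldr
    (· ⊔ ·) ⊥

omit [L.IsRelational] in
lemma realize_liftA {A : Type*} {n m : ℕ} (s : α ⊕ Fin n) (x : α → A)
    (v : Fin n → A) (w : Fin m → A) :
    Sum.elim x (Fin.append v w) (liftA m s) = Sum.elim x v s := by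
  rcases s with s | i
  · rfl
  · exact Fin.append_left v w i

lemma realize_adjF {A : Type*} [L.Structure A] (l : List (Σ n, L.Relations n))
    {n : ℕ} (s u : α ⊕ Fin n) (x : α → A) (v : Fin n → A) :
    (adjF l s u).Realize x v ↔ Adj0 l (Sum.elim x v s) (Sum.elim x v u) := by
  rw [adjF, realize_foldr_sup]
  constructor
  · rintro ⟨φ, hφ, h⟩
    rw [List.mem_map] at hφ
    obtain ⟨R, hRl, rfl⟩ := hφ
    rw [realize_exN] at h
    obtain ⟨w, h⟩ := h
    rw [realize_inf, realize_inf, realize_foldr_sup, realize_foldr_sup] at h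
    obtain ⟨⟨hrel, ⟨_, hmem, hi⟩⟩, ⟨_, hmem', hj⟩⟩ := h
    rw [List.mem_map] at hmem hmem'
    obtain ⟨i, _, rfl⟩ := hmem
    obtain ⟨j, _, rfl⟩ := hmem'
    rw [BoundedFormula.realize_bdEqual] at hi hj
    simp only [Term.realize_var] at hi hj
    rw [realize_liftA] at hi hj
    rw [BoundedFormula.realize_rel] at hrel
    simp only [Term.realize_var] at hrel
    exact ⟨R, hRl, fun i => Fin.append v w (Fin.natAdd n i), hrel, ⟨i, hi⟩, ⟨j, hj⟩⟩
  · rintro ⟨R, hRl, t, hrel, ⟨i, hi⟩, ⟨j, hj⟩⟩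
    refine ⟨_, List.mem_map.2 ⟨R, hRl, rfl⟩, ?_⟩
    rw [realize_exN]
    refine ⟨t, ?_⟩
    rw [realize_inf, realize_inf, realize_foldr_sup, realize_foldr_sup]
    refine ⟨⟨?_, ⟨_, List.mem_map.2 ⟨i, List.mem_finRange i, rfl⟩, ?_⟩⟩,
      ⟨_, List.mem_map.2 ⟨j, List.mem_finRange j, rfl⟩, ?_⟩⟩
    · rw [BoundedFormula.realize_rel]
      simp only [Term.realize_var]
      convert hrel using 1
      funext i
      simp only [Sum.elim_inr]
      exact Fin.append_right v t i
    · rw [BoundedFormula.realize_bdEqual]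
      simp only [Term.realize_var]
      rw [realize_liftA]
      simp only [Sum.elim_inr]
      rw [Fin.append_right, hi]
    · rw [BoundedFormula.realize_bdEqual]
      simp only [Term.realize_var]
      rw [realize_liftA]
      simp only [Sum.elim_inr]
      rw [Fin.append_right, hj]

/-- formula version of `CloseTo` -/
def closeF (l : List (Σ n, L.Relations n)) :
    (d : ℕ) → ∀ {n : ℕ}, (α ⊕ Fin n) → (α ⊕ Fin n) → L.BoundedFormula α n
  | 0, _, s, u => Term.bdEqual (Term.var s) (Term.var u)
  | (d+1), n, s, u => closeF l d s u ⊔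
      (((adjF l (lift1 s) (Sum.inr (Fin.last n))) ⊓
        closeF l d (Sum.inr (Fin.last n)) (lift1 u)).ex)

omit [L.IsRelational] in
lemma realize_lift1 {A : Type*} {n : ℕ} (s : α ⊕ Fin n) (x : α → A)
    (v : Fin n → A) (y : A) :
    Sum.elim x (Fin.snoc v y) (lift1 s) = Sum.elim x v s := by
  rcases s with s | i
  · rfl
  · simp [lift1]

lemma realize_closeF {A : Type*} [L.Structure A] (l : List (Σ n, L.Relations n)) :
    ∀ (d : ℕ) {n : ℕ} (s u : α ⊕ Fin n) (x : α → A) (v : Fin n → A),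
      (closeF l d s u).Realize x v ↔ CloseTo l d (Sum.elim x v s) (Sum.elim x v u)
  | 0, _, s, u, x, v => by
    rw [closeF, realize_bdEqual]
    simp only [Term.realize_var]
    rfl
  | (d+1), n, s, u, x, v => by
    rw [closeF, realize_sup, realize_ex, realize_closeF l d]
    show _ ↔ (CloseTo l d _ _ ∨ ∃ z, Adj0 l _ z ∧ CloseTo l d z _)
    refine or_congr Iff.rfl (exists_congr fun y => ?_)
    rw [realize_inf, realize_adjF, realize_closeF l d, realize_lift1, realize_lift1]
    simp only [Sum.elim_inr, Fin.snoc_last]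

end Stmt6Aux

namespace Stmt6Aux

open FirstOrder FirstOrder.Language FirstOrder.Language.BoundedFormula

variable {L : FirstOrder.Language} [L.IsRelational]

/-- relation symbols occurring in a formula -/
def relList : ∀ {α : Type} {n : ℕ}, L.BoundedFormula α n → List (Σ n, L.Relations n)
  | _, _, .falsum => []
  | _, _, .equal _ _ => []
  | _, _, .rel R _ => [⟨_, R⟩]
  | _, _, .imp f g => relList f ++ relList g
  | _, _, .all f => relList f

/-- quantifier depth -/
def qd : ∀ {α : Type} {n : ℕ}, L.BoundedFormula α n → ℕ
  | _, _, .falsum => 0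
  | _, _, .equal _ _ => 0
  | _, _, .rel _ _ => 0
  | _, _, .imp f g => max (qd f) (qd g)
  | _, _, .all f => qd f + 1

/-- extended cluster assignment: the new variable `k` joins the cluster of variable `j`,
or starts a new cluster when `j = k`. -/
def ext {k : ℕ} (c : Fin k → Fin k) (j : Fin (k+1)) : Fin (k+1) → Fin (k+1) :=
  Fin.snoc (Fin.castSucc ∘ c)
    (if h : j = Fin.last k then Fin.last k else Fin.castSucc (c (j.castPred h)))

/-- guard target: the variable `j`, or the center `x` when `j = k` -/
def tgt {k : ℕ} (j : Fin (k+1)) : (Fin 1) ⊕ Fin (k+1) :=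
  if j = Fin.last k then Sum.inl 0 else Sum.inr j

open Classical in
/-- the local translation of a formula -/
noncomputable def Tr (l : List (Σ n, L.Relations n)) :
    ∀ {k : ℕ}, (Fin k → Fin k) → L.BoundedFormula Empty k → L.BoundedFormula (Fin 1) k
  | _, _, .falsum => ⊥
  | _, c, .equal t₁ t₂ =>
      if c (varIdx t₁) = c (varIdx t₂) then
        Term.bdEqual (Term.var (Sum.inr (varIdx t₁))) (Term.var (Sum.inr (varIdx t₂)))
      else ⊥
  | _, c, .rel R ts =>
      if ∀ i j, c (varIdx (ts i)) = c (varIdx (ts j)) then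
        R.boundedFormula fun i => Term.var (Sum.inr (varIdx (ts i)))
      else ⊥
  | _, c, .imp f g => (Tr l c f).imp (Tr l c g)
  | k, c, .all f =>
      (((List.finRange (k+1)).map fun j =>
        (closeF l (4 ^ (qd f + 1)) (Sum.inr (Fin.last k)) (tgt j)).imp
          (Tr l (ext c j) f)).foldr (· ⊓ ·) ⊤).all

variable {A : Type} [L.Structure A] {l : List (Σ n, L.Relations n)}

lemma exists_far {D : ℕ}
    (hfar : ∃ S : Finset A, D + 1 ≤ S.card ∧
      (S : Set A).Pairwise (fun x y => FarApart L x y (2 * 4 ^ (D + 2))))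
    {k : ℕ} (hk : k ≤ D) (v : Fin k → A) :
    ∃ s : A, ∀ i, ¬ CloseTo l (4 ^ (D + 2)) s (v i) := by
  classical
  obtain ⟨S, hcard, hpair⟩ := hfar
  by_contra hcon
  push_neg at hcon
  have hS : ∀ s : A, s ∈ S → ∃ i, CloseTo l (4 ^ (D + 2)) s (v i) := fun s _ => hcon s
  rcases Nat.eq_zero_or_pos k with hk0 | hk0
  · subst hk0
    have : (0 : ℕ) < S.card := by omega
    obtain ⟨s, hs⟩ := Finset.card_pos.1 this
    obtain ⟨i, _⟩ := hS s hs
    exact i.elim0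
  · have : Nonempty (Fin k) := ⟨⟨0, hk0⟩⟩
    inhabit (Fin k)
    set f : A → Fin k := fun s => if h : ∃ i, CloseTo l (4 ^ (D + 2)) s (v i) then h.choose
      else default with hf
    have hmaps : ∀ s ∈ S, f s ∈ (Finset.univ : Finset (Fin k)) := fun _ _ => Finset.mem_univ _
    have hlt : (Finset.univ : Finset (Fin k)).card < S.card := by
      simpa using by omega
    obtain ⟨s, hs, s', hs', hne, heq⟩ :=
      Finset.exists_ne_map_eq_of_card_lt_of_maps_to hlt hmaps
    have h1 : CloseTo l (4 ^ (D + 2)) s (v (f s)) := by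
      rw [hf]
      simp only [hS s hs, dif_pos]
      exact (hS s hs).choose_spec
    have h2 : CloseTo l (4 ^ (D + 2)) s' (v (f s')) := by
      rw [hf]
      simp only [hS s' hs', dif_pos]
      exact (hS s' hs').choose_spec
    rw [← heq] at h2
    have := h1.trans h2.symm
    obtain ⟨walk, hwalk⟩ := this.toWalk
    exact hpair hs hs' hne ⟨walk, by omega⟩

end Stmt6Aux

namespace Stmt6Aux

open FirstOrder FirstOrder.Language FirstOrder.Language.BoundedFormula

variable {L : FirstOrder.Language} [L.IsRelational]
variable {A : Type} [L.Structure A] {l : List (Σ n, L.Relations n)}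

lemma ext_coh {k : ℕ} {c : Fin k → Fin k} {τ : Fin k → (A ≃[L] A)}
    (hcoh : ∀ i j, c i = c j → τ i = τ j) (j : Fin (k+1)) (e : A ≃[L] A)
    (hje : ∀ h : j ≠ Fin.last k, e = τ (j.castPred h)) :
    ∀ i i', ext c j i = ext c j i' →
      (Fin.snoc (α := fun _ => A ≃[L] A) τ e i) = Fin.snoc (α := fun _ => A ≃[L] A) τ e i' := by
  have key : ∀ b : Fin k, ext c j (Fin.last k) = ext c j (Fin.castSucc b) →
      (Fin.snoc (α := fun _ => A ≃[L] A) τ e (Fin.last k)) =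
        Fin.snoc (α := fun _ => A ≃[L] A) τ e (Fin.castSucc b) := by
    intro b h
    rw [ext, Fin.snoc_last, Fin.snoc_castSucc] at h
    rw [Fin.snoc_last, Fin.snoc_castSucc]
    split_ifs at h with hj
    · exact absurd h.symm (Fin.castSucc_lt_last _).ne
    · rw [hje hj]
      exact hcoh _ _ (Fin.castSucc_inj.1 h)
  intro i i' h
  rcases Fin.eq_castSucc_or_eq_last i with ⟨b, rfl⟩ | rfl
  · rcases Fin.eq_castSucc_or_eq_last i' with ⟨b', rfl⟩ | rfl
    · rw [Fin.snoc_castSucc, Fin.snoc_castSucc]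
      rw [ext, Fin.snoc_castSucc, Fin.snoc_castSucc] at h
      exact hcoh _ _ (Fin.castSucc_inj.1 h)
    · exact (key b h.symm).symm
  · rcases Fin.eq_castSucc_or_eq_last i' with ⟨b', rfl⟩ | rfl
    · exact key b' h
    · rfl

lemma ext_sep {k : ℕ} {c : Fin k → Fin k} {v : Fin k → A} (d : ℕ)
    (hsep : ∀ i i', c i ≠ c i' → ¬ CloseTo l (3 * 4 ^ (d+1)) (v i) (v i'))
    (j : Fin (k+1)) (y : A)
    (hcase : (∃ h : j ≠ Fin.last k, CloseTo l (4 ^ (d+1)) y (v (j.castPred h))) ∨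
      (j = Fin.last k ∧ ∀ i, ¬ CloseTo l (3 * 4 ^ d) y (v i))) :
    ∀ i i', ext c j i ≠ ext c j i' →
      ¬ CloseTo l (3 * 4 ^ d) (Fin.snoc (α := fun _ => A) v y i)
        (Fin.snoc (α := fun _ => A) v y i') := by
  have key : ∀ b : Fin k, ext c j (Fin.last k) ≠ ext c j (Fin.castSucc b) →
      ¬ CloseTo l (3 * 4 ^ d) y (v b) := by
    intro b hne hcl
    rw [ext, Fin.snoc_last, Fin.snoc_castSucc] at hne
    rcases hcase with ⟨hj, hclose⟩ | ⟨hj, hfarY⟩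
    · rw [dif_neg hj] at hne
      have hcc : c (j.castPred hj) ≠ c b := fun hh => hne (by simp [Function.comp, hh])
      have h1 : CloseTo l (4 ^ (d+1) + 3 * 4 ^ d) (v (j.castPred hj)) (v b) :=
        (hclose.symm).trans hcl
      refine hsep _ _ hcc (h1.mono ?_)
      have : (4:ℕ) ^ (d+1) = 4 * 4 ^ d := by ring
      omega
    · exact hfarY b hcl
  intro i i' h
  rcases Fin.eq_castSucc_or_eq_last i with ⟨b, rfl⟩ | rfl
  · rcases Fin.eq_castSucc_or_eq_last i' with ⟨b', rfl⟩ | rfl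
    · rw [Fin.snoc_castSucc, Fin.snoc_castSucc]
      refine fun hcl => hsep b b' ?_ (hcl.mono ?_)
      · intro hh
        apply h
        rw [ext, Fin.snoc_castSucc, Fin.snoc_castSucc]
        simp [Function.comp, hh]
      · have : (4:ℕ) ^ (d+1) = 4 * 4 ^ d := by ring
        omega
    · rw [Fin.snoc_castSucc, Fin.snoc_last]
      intro hcl
      exact key b (fun hh => h hh.symm) hcl.symm
  · rcases Fin.eq_castSucc_or_eq_last i' with ⟨b', rfl⟩ | rfl
    · rw [Fin.snoc_last, Fin.snoc_castSucc]
      exact key b' h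
    · exact absurd rfl h

theorem Tr_correct {D : ℕ} (a : A) (htrans : VertexTransitive L A)
    (hfar : ∃ S : Finset A, D + 1 ≤ S.card ∧
      (S : Set A).Pairwise (fun x y => FarApart L x y (2 * 4 ^ (D + 2)))) :
    ∀ {k : ℕ} (ψ : L.BoundedFormula Empty k) (c : Fin k → Fin k) (v w : Fin k → A)
      (τ : Fin k → (A ≃[L] A)),
      k + qd ψ ≤ D →
      (∀ R ∈ relList ψ, R ∈ l) →
      (∀ i, w i = τ i (v i)) →
      (∀ i j, c i = c j → τ i = τ j) →
      (∀ i j, c i ≠ c j → ¬ CloseTo l (3 * 4 ^ qd ψ) (v i) (v j)) →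
      (ψ.Realize Empty.elim v ↔ (Tr l c ψ).Realize (fun _ => a) w) := by
  intro k ψ
  induction ψ with
  | falsum =>
    intro c v w τ _ _ _ _ _
    refine iff_of_false (fun h => h) ?_
    simp [Tr]
  | equal t₁ t₂ =>
    intro c v w τ hk hrel hw hcoh hsep
    have e1 : (BoundedFormula.equal t₁ t₂).Realize Empty.elim v ↔
        v (varIdx t₁) = v (varIdx t₂) := by
      show (t₁.realize _ = t₂.realize _) ↔ _
      rw [realize_varIdx, realize_varIdx]
    rw [e1]
    simp only [Tr]
    split_ifs with h
    · rw [BoundedFormula.realize_bdEqual]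
      simp only [Term.realize_var, Sum.elim_inr]
      rw [hw, hw, hcoh _ _ h]
      exact ⟨fun hh => by rw [hh], fun hh => (EmbeddingLike.apply_eq_iff_eq _).1 hh⟩
    · refine iff_of_false (fun hv => hsep _ _ h ?_) (by simp)
      exact (show CloseTo l 0 (v (varIdx t₁)) (v (varIdx t₂)) from hv).mono (Nat.zero_le _)
  | @rel n m R ts =>
    intro c v w τ hk hrel hw hcoh hsep
    have e1 : (BoundedFormula.rel R ts).Realize Empty.elim v ↔
        Structure.RelMap R (fun i => v (varIdx (ts i))) := by
      show Structure.RelMap R _ ↔ _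
      refine iff_of_eq (congrArg _ ?_)
      funext i
      exact realize_varIdx (ts i) v
    rw [e1]
    simp only [Tr]
    split_ifs with h
    · rw [BoundedFormula.realize_rel]
      simp only [Term.realize_var, Sum.elim_inr]
      rcases isEmpty_or_nonempty (Fin m) with hE | hN
      · have heq : (fun i => w (varIdx (ts i))) = (fun i => v (varIdx (ts i))) :=
          funext fun i => (hE.false i).elim
        rw [heq]
      · obtain ⟨i₀⟩ := hN
        have hfuns : (fun i => w (varIdx (ts i))) =
            (τ (varIdx (ts i₀))) ∘ (fun i => v (varIdx (ts i))) := by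
          funext i
          rw [hw, hcoh _ _ (h i i₀)]
          rfl
        rw [hfuns, Language.Equiv.map_rel]
    · refine iff_of_false (fun hrm => ?_) (by simp)
      push_neg at h
      obtain ⟨i, j, hij⟩ := h
      refine hsep _ _ hij ?_
      have hadj : Adj0 l (v (varIdx (ts i))) (v (varIdx (ts j))) :=
        ⟨⟨_, R⟩, hrel _ (by simp [relList]), fun i => v (varIdx (ts i)), hrm,
          ⟨i, rfl⟩, ⟨j, rfl⟩⟩
      exact (show CloseTo l 1 (v (varIdx (ts i))) (v (varIdx (ts j))) from
        Or.inr ⟨_, hadj, closeTo_refl 0 _⟩).mono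
        (by have : 0 < 3 * 4 ^ qd (BoundedFormula.rel R ts) := by positivity
            omega)
  | imp f g ihf ihg =>
    intro c v w τ hk hrel hw hcoh hsep
    have hqd : qd (f.imp g) = max (qd f) (qd g) := by simp [qd]
    rw [hqd] at hk hsep
    have hmono : ∀ q : ℕ, q ≤ max (qd f) (qd g) → 3 * 4 ^ q ≤ 3 * 4 ^ max (qd f) (qd g) := by
      intro q hq
      exact Nat.mul_le_mul_left 3 (Nat.pow_le_pow_right (by norm_num) hq)
    have e1 := ihf c v w τ (by have : qd f ≤ max (qd f) (qd g) := le_max_left _ _; omega)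
      (fun R hR => hrel R (by simp only [relList, List.mem_append]; exact Or.inl hR))
      hw hcoh
      (fun i j hij hcl => hsep i j hij (hcl.mono (hmono _ (le_max_left _ _))))
    have e2 := ihg c v w τ (by have : qd g ≤ max (qd f) (qd g) := le_max_right _ _; omega)
      (fun R hR => hrel R (by simp only [relList, List.mem_append]; exact Or.inr hR))
      hw hcoh
      (fun i j hij hcl => hsep i j hij (hcl.mono (hmono _ (le_max_right _ _))))
    simp only [Tr, BoundedFormula.realize_imp]
    rw [e1, e2]
  | @all kk f ih =>
    intro c v w τ hk hrel hw hcoh hsep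
    have hqd : qd (BoundedFormula.all f) = qd f + 1 := by simp [qd]
    rw [hqd] at hk hsep
    have hrelf : ∀ R ∈ relList f, R ∈ l := fun R hR => hrel R (by simpa [relList] using hR)
    set d := qd f with hd
    set t : ℕ := 4 ^ (d + 1) with ht
    rw [BoundedFormula.realize_all]
    simp only [Tr]
    rw [BoundedFormula.realize_all]
    have hconj : ∀ y' : A,
        ((((List.finRange (kk+1)).map fun j =>
          (closeF l (4 ^ (qd f + 1)) (Sum.inr (Fin.last kk)) (tgt j)).imp
            (Tr l (ext c j) f)).foldr (· ⊓ ·) ⊤).Realize (fun _ => a) (Fin.snoc w y')) ↔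
        ∀ j : Fin (kk+1),
          CloseTo l t y' (Sum.elim (fun _ : Fin 1 => a) (Fin.snoc w y') (tgt j)) →
          (Tr l (ext c j) f).Realize (fun _ => a) (Fin.snoc w y') := by
      intro y'
      rw [realize_foldr_inf]
      constructor
      · intro hh j hg
        have h2 := hh _ (List.mem_map.2 ⟨j, List.mem_finRange j, rfl⟩)
        rw [BoundedFormula.realize_imp, realize_closeF] at h2
        apply h2
        simpa [Fin.snoc_last] using hg
      · intro hh φ hφ
        obtain ⟨j, _, rfl⟩ := List.mem_map.1 hφ
        rw [BoundedFormula.realize_imp, realize_closeF]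
        intro hg
        exact hh j (by simpa [Fin.snoc_last] using hg)
    constructor
    · -- real ⇒ simulated
      intro hall y'
      rw [hconj y']
      intro j hguard
      by_cases hj : j = Fin.last kk
      · -- new cluster
        obtain ⟨s, hs⟩ := exists_far (l := l) hfar (show kk ≤ D by omega) v
        obtain ⟨e, he⟩ := htrans s a
        have hguard' : CloseTo l t y' a := by
          simpa [tgt, hj] using hguard
        set y := e.symm y' with hy
        have hys : CloseTo l t y s := by
          have h2 := hguard'.map e.symm
          rwa [← he, Language.Equiv.symm_apply_apply] at h2
        have hfarY : ∀ i, ¬ CloseTo l (3 * 4 ^ d) y (v i) := by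
          intro i hcl
          refine hs i ((hys.symm.trans hcl).mono ?_)
          have h4 : (4:ℕ) ^ (d+1) + 3 * 4 ^ d ≤ 4 ^ (d + 2) := by
            have : (4:ℕ) ^ (d+2) = 16 * 4 ^ d := by ring
            have : (4:ℕ) ^ (d+1) = 4 * 4 ^ d := by ring
            omega
          refine h4.trans (Nat.pow_le_pow_right (by norm_num) (by omega))
        refine (ih (ext c j) (Fin.snoc v y) (Fin.snoc w y') (Fin.snoc τ e)
          (by omega) hrelf ?_ (ext_coh hcoh j e (fun hne => absurd hj hne)) ?_).1 (hall y)
        · intro i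
          refine Fin.lastCases ?_ ?_ i
          · rw [Fin.snoc_last, Fin.snoc_last, Fin.snoc_last, hy,
              Language.Equiv.apply_symm_apply]
          · intro b
            rw [Fin.snoc_castSucc, Fin.snoc_castSucc, Fin.snoc_castSucc]
            exact hw b
        · exact ext_sep d hsep j y (Or.inr ⟨hj, hfarY⟩)
      · -- join the cluster of variable j
        have hsnocj : Fin.snoc (α := fun _ => A) w y' j = w (j.castPred hj) := by
          have h2 := Fin.snoc_castSucc (α := fun _ => A) (p := w) (x := y') (i := j.castPred hj)
          rwa [Fin.castSucc_castPred] at h2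
        have hguard' : CloseTo l t y' (w (j.castPred hj)) := by
          have heval : Sum.elim (fun _ : Fin 1 => a) (Fin.snoc w y') (tgt j) =
              w (j.castPred hj) := by
            rw [tgt, if_neg hj]
            simp only [Sum.elim_inr]
            exact hsnocj
          rwa [heval] at hguard
        set e := τ (j.castPred hj) with hee
        set y := e.symm y' with hy
        have hyv : CloseTo l t y (v (j.castPred hj)) := by
          have h2 := hguard'.map e.symm
          rwa [hw (j.castPred hj), hee, Language.Equiv.symm_apply_apply] at h2
        refine (ih (ext c j) (Fin.snoc v y) (Fin.snoc w y') (Fin.snoc τ e)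
          (by omega) hrelf ?_
          (ext_coh hcoh j e (fun hne => by rw [hee])) ?_).1 (hall y)
        · intro i
          refine Fin.lastCases ?_ ?_ i
          · rw [Fin.snoc_last, Fin.snoc_last, Fin.snoc_last, hy,
              Language.Equiv.apply_symm_apply]
          · intro b
            rw [Fin.snoc_castSucc, Fin.snoc_castSucc, Fin.snoc_castSucc]
            exact hw b
        · exact ext_sep d hsep j y (Or.inl ⟨hj, hyv⟩)
    · -- simulated ⇒ real
      intro hsim y
      by_cases hc : ∃ i, CloseTo l t y (v i)
      · obtain ⟨i₀, hi₀⟩ := hc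
        have hjne : (i₀.castSucc : Fin (kk+1)) ≠ Fin.last kk := (Fin.castSucc_lt_last i₀).ne
        have hguard : CloseTo l t (τ i₀ y)
            (Sum.elim (fun _ : Fin 1 => a) (Fin.snoc w (τ i₀ y)) (tgt i₀.castSucc)) := by
          have hval : Sum.elim (fun _ : Fin 1 => a) (Fin.snoc w (τ i₀ y)) (tgt i₀.castSucc)
              = w i₀ := by
            rw [tgt, if_neg hjne]
            simp only [Sum.elim_inr]
            exact Fin.snoc_castSucc (α := fun _ => A) (p := w) (x := τ i₀ y) (i := i₀)
          rw [hval, hw i₀]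
          exact hi₀.map (τ i₀)
        have htr := (hconj (τ i₀ y)).1 (hsim (τ i₀ y)) i₀.castSucc hguard
        refine (ih (ext c i₀.castSucc) (Fin.snoc v y) (Fin.snoc w (τ i₀ y)) (Fin.snoc τ (τ i₀))
          (by omega) hrelf ?_
          (ext_coh hcoh i₀.castSucc (τ i₀) (fun hne => by rw [Fin.castPred_castSucc])) ?_).2 htr
        · intro i
          refine Fin.lastCases ?_ ?_ i
          · rw [Fin.snoc_last, Fin.snoc_last, Fin.snoc_last]
          · intro b
            rw [Fin.snoc_castSucc, Fin.snoc_castSucc, Fin.snoc_castSucc]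
            exact hw b
        · refine ext_sep d hsep i₀.castSucc y (Or.inl ⟨hjne, ?_⟩)
          rw [Fin.castPred_castSucc]
          exact hi₀
      · push_neg at hc
        obtain ⟨e, he⟩ := htrans y a
        have hguard : CloseTo l t a
            (Sum.elim (fun _ : Fin 1 => a) (Fin.snoc w a) (tgt (Fin.last kk))) := by
          have hval : Sum.elim (fun _ : Fin 1 => a) (Fin.snoc w a) (tgt (Fin.last kk)) = a := by
            rw [tgt, if_pos rfl]
            rfl
          rw [hval]
          exact closeTo_refl t a
        have htr := (hconj a).1 (hsim a) (Fin.last kk) hguard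
        refine (ih (ext c (Fin.last kk)) (Fin.snoc v y) (Fin.snoc w a) (Fin.snoc τ e)
          (by omega) hrelf ?_
          (ext_coh hcoh (Fin.last kk) e (fun hne => absurd rfl hne)) ?_).2 htr
        · intro i
          refine Fin.lastCases ?_ ?_ i
          · rw [Fin.snoc_last, Fin.snoc_last, Fin.snoc_last, he]
          · intro b
            rw [Fin.snoc_castSucc, Fin.snoc_castSucc, Fin.snoc_castSucc]
            exact hw b
        · refine ext_sep d hsep (Fin.last kk) y (Or.inr ⟨rfl, fun i hcl => hc i (hcl.mono ?_)⟩)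
          have : (4:ℕ) ^ (d+1) = 4 * 4 ^ d := by ring
          omega

end Stmt6Aux

namespace Stmt6Aux

open FirstOrder FirstOrder.Language FirstOrder.Language.BoundedFormula

variable {L : FirstOrder.Language} [L.IsRelational]
variable {A : Type} [L.Structure A] {l : List (Σ n, L.Relations n)}

attribute [local instance] inducedStructure

lemma closeTo_mem_ball {a u : A} {M T : ℕ} (h : CloseTo l M a u) (hMT : M ≤ T) :
    u ∈ ballSet L (fun _ : Fin 1 => a) T := by
  obtain ⟨wk, hwk⟩ := h.toWalk
  exact ⟨0, wk, by omega⟩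

lemma closeTo_down {s : Set A} :
    ∀ (d : ℕ) (u w : s), CloseTo l d u w → CloseTo l d (u : A) (w : A) := by
  intro d
  induction d with
  | zero => exact fun u w h => congrArg _ (h : u = w)
  | succ d ih =>
    rintro u w (h | ⟨z, ⟨R, hR, t, ht, ⟨i, hi⟩, ⟨j, hj⟩⟩, hc⟩)
    · exact Or.inl (ih u w h)
    · refine Or.inr ⟨z, ⟨R, hR, fun i => (t i : A), ht, ⟨i, congrArg _ hi⟩,
        ⟨j, congrArg _ hj⟩⟩, ih z w hc⟩

lemma closeTo_up {a : A} {T : ℕ} :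
    ∀ (d M : ℕ) (u w : A), CloseTo l M a u → CloseTo l d u w → M + d + 1 ≤ T →
      ∀ (hu : u ∈ ballSet L (fun _ : Fin 1 => a) T)
        (hw : w ∈ ballSet L (fun _ : Fin 1 => a) T),
        CloseTo l d (⟨u, hu⟩ : ballSet L (fun _ : Fin 1 => a) T) ⟨w, hw⟩ := by
  intro d
  induction d with
  | zero =>
    intro M u w _ h _ hu hw
    exact Subtype.ext (h : u = w)
  | succ d ih =>
    rintro M u w hau (h | ⟨z, hadj, hc⟩) hT hu hw
    · exact Or.inl (ih M u w hau h (by omega) hu hw)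
    · have hz : CloseTo l (M + 1) a z := hau.step_right hadj
      obtain ⟨R, hR, t, ht, ⟨i, hi⟩, ⟨j, hj⟩⟩ := hadj
      have htmem : ∀ b : Fin R.1, t b ∈ ballSet L (fun _ : Fin 1 => a) T := by
        intro b
        refine closeTo_mem_ball (hau.step_right ⟨R, hR, t, ht, ⟨i, hi⟩, ⟨b, rfl⟩⟩) (by omega)
      refine Or.inr ⟨⟨z, closeTo_mem_ball hz (by omega)⟩,
        ⟨R, hR, fun b => ⟨t b, htmem b⟩, ht, ⟨i, Subtype.ext hi⟩, ⟨j, Subtype.ext hj⟩⟩,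
        ih (M + 1) z w hz hc (by omega) _ hw⟩

lemma snoc_val {s : Set A} {k : ℕ} (wB : Fin k → s) (y' : s) (i : Fin (k+1)) :
    ((Fin.snoc (α := fun _ => s) wB y' i : s) : A) =
      Fin.snoc (α := fun _ => A) (fun b => (wB b : A)) (y' : A) i := by
  refine Fin.lastCases ?_ ?_ i
  · rw [Fin.snoc_last, Fin.snoc_last]
  · intro b
    rw [Fin.snoc_castSucc, Fin.snoc_castSucc]

lemma Tr_local {D T : ℕ} (a : A) (hDT : (D + 2) * 4 ^ (D + 1) + D + 2 ≤ T) :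
    ∀ {k : ℕ} (ψ : L.BoundedFormula Empty k) (c : Fin k → Fin k) (w : Fin k → A),
      k + qd ψ ≤ D →
      (∀ i, CloseTo l (k * 4 ^ D) a (w i)) →
      ∀ (wB : Fin k → (ballSet L (fun _ : Fin 1 => a) T))
        (hwB : ∀ i, (wB i : A) = w i)
        (aB : ballSet L (fun _ : Fin 1 => a) T) (haB : (aB : A) = a),
        ((Tr l c ψ).Realize (fun _ => a) w ↔ (Tr l c ψ).Realize (fun _ => aB) wB) := by
  have hpow : ∀ q q' : ℕ, q ≤ q' → (4:ℕ) ^ q ≤ 4 ^ q' :=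
    fun q q' h => Nat.pow_le_pow_right (by norm_num) h
  intro k ψ
  induction ψ with
  | falsum =>
    intro c w hk hw wB hwB aB haB
    simp [Tr]
  | equal t₁ t₂ =>
    intro c w hk hw wB hwB aB haB
    simp only [Tr]
    split_ifs with h
    · rw [BoundedFormula.realize_bdEqual, BoundedFormula.realize_bdEqual]
      simp only [Term.realize_var, Sum.elim_inr]
      rw [← hwB, ← hwB]
      exact ⟨fun hh => Subtype.ext hh, fun hh => congrArg _ hh⟩
    · exact iff_of_false (by simp) (by simp)
  | @rel n m R ts =>
    intro c w hk hw wB hwB aB haB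
    simp only [Tr]
    split_ifs with h
    · rw [BoundedFormula.realize_rel, BoundedFormula.realize_rel]
      simp only [Term.realize_var, Sum.elim_inr]
      have : Structure.RelMap (M := (ballSet L (fun _ : Fin 1 => a) T))
          R (fun i => wB (varIdx (ts i))) ↔
          Structure.RelMap R (fun i => (wB (varIdx (ts i)) : A)) := Iff.rfl
      rw [this]
      have heq : (fun i => (wB (varIdx (ts i)) : A)) = fun i => w (varIdx (ts i)) := by
        funext i
        exact hwB _
      rw [heq]
    · exact iff_of_false (by simp) (by simp)
  | imp f g ihf ihg =>
    intro c w hk hw wB hwB aB haB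
    have hqd : qd (f.imp g) = max (qd f) (qd g) := by simp [qd]
    rw [hqd] at hk
    simp only [Tr, BoundedFormula.realize_imp]
    rw [ihf c w (by have := le_max_left (qd f) (qd g); omega) hw wB hwB aB haB,
      ihg c w (by have := le_max_right (qd f) (qd g); omega) hw wB hwB aB haB]
  | @all kk f ih =>
    intro c w hk hw wB hwB aB haB
    have hqd : qd (BoundedFormula.all f) = qd f + 1 := by simp [qd]
    rw [hqd] at hk
    set d := qd f with hd
    set t : ℕ := 4 ^ (d + 1) with ht
    have htD : t ≤ 4 ^ D := hpow _ _ (by omega)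
    have hkD : kk ≤ D := by omega
    have hball : (kk + 1) * 4 ^ D ≤ (D + 2) * 4 ^ (D+1) := by
      have h1 : (kk + 1) ≤ D + 2 := by omega
      have h2 : (4:ℕ) ^ D ≤ 4 ^ (D + 1) := hpow _ _ (by omega)
      exact Nat.mul_le_mul h1 h2
    simp only [Tr]
    rw [BoundedFormula.realize_all, BoundedFormula.realize_all]
    -- conjunction unfolding on both sides
    have hconjA : ∀ y : A,
        ((((List.finRange (kk+1)).map fun j =>
          (closeF l (4 ^ (qd f + 1)) (Sum.inr (Fin.last kk)) (tgt j)).imp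
            (Tr l (ext c j) f)).foldr (· ⊓ ·) ⊤).Realize (fun _ => a) (Fin.snoc w y)) ↔
        ∀ j : Fin (kk+1),
          CloseTo l t y (Sum.elim (fun _ : Fin 1 => a) (Fin.snoc w y) (tgt j)) →
          (Tr l (ext c j) f).Realize (fun _ => a) (Fin.snoc w y) := by
      intro y
      rw [realize_foldr_inf]
      constructor
      · intro hh j hg
        have h2 := hh _ (List.mem_map.2 ⟨j, List.mem_finRange j, rfl⟩)
        rw [BoundedFormula.realize_imp, realize_closeF] at h2
        exact h2 (by simpa [Fin.snoc_last] using hg)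
      · intro hh φ hφ
        obtain ⟨j, _, rfl⟩ := List.mem_map.1 hφ
        rw [BoundedFormula.realize_imp, realize_closeF]
        intro hg
        exact hh j (by simpa [Fin.snoc_last] using hg)
    have hconjB : ∀ y' : ballSet L (fun _ : Fin 1 => a) T,
        ((((List.finRange (kk+1)).map fun j =>
          (closeF l (4 ^ (qd f + 1)) (Sum.inr (Fin.last kk)) (tgt j)).imp
            (Tr l (ext c j) f)).foldr (· ⊓ ·) ⊤).Realize (fun _ => aB) (Fin.snoc wB y')) ↔
        ∀ j : Fin (kk+1),
          CloseTo l t y' (Sum.elim (fun _ : Fin 1 => aB) (Fin.snoc wB y') (tgt j)) →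
          (Tr l (ext c j) f).Realize (fun _ => aB) (Fin.snoc wB y') := by
      intro y'
      rw [realize_foldr_inf]
      constructor
      · intro hh j hg
        have h2 := hh _ (List.mem_map.2 ⟨j, List.mem_finRange j, rfl⟩)
        rw [BoundedFormula.realize_imp, realize_closeF] at h2
        exact h2 (by simpa [Fin.snoc_last] using hg)
      · intro hh φ hφ
        obtain ⟨j, _, rfl⟩ := List.mem_map.1 hφ
        rw [BoundedFormula.realize_imp, realize_closeF]
        intro hg
        exact hh j (by simpa [Fin.snoc_last] using hg)
    -- value of the guard target
    have htgtval : ∀ (y' : ballSet L (fun _ : Fin 1 => a) T) (j : Fin (kk+1)),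
        ((Sum.elim (fun _ : Fin 1 => aB) (Fin.snoc wB y') (tgt j) :
          ballSet L (fun _ : Fin 1 => a) T) : A) =
        Sum.elim (fun _ : Fin 1 => a) (Fin.snoc (α := fun _ => A) w (y' : A)) (tgt j) := by
      intro y' j
      rw [tgt]
      split_ifs with hj
      · simpa using haB
      · simp only [Sum.elim_inr]
        rw [snoc_val]
        congr 1
        funext b
        exact hwB b
    -- bound on the guard target
    have htgtbound : ∀ (y : A) (j : Fin (kk+1)),
        CloseTo l t y (Sum.elim (fun _ : Fin 1 => a) (Fin.snoc (α := fun _ => A) w y) (tgt j)) →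
        CloseTo l (kk * 4 ^ D + t) a y := by
      intro y j hg
      rw [tgt] at hg
      split_ifs at hg with hj
      · simp only [Sum.elim_inl] at hg
        exact ((closeTo_refl 0 a).trans hg.symm).mono (by omega)
      · simp only [Sum.elim_inr] at hg
        have hsnocj : Fin.snoc (α := fun _ => A) w y j = w (j.castPred hj) := by
          have h2 := Fin.snoc_castSucc (α := fun _ => A) (p := w) (x := y) (i := j.castPred hj)
          rwa [Fin.castSucc_castPred] at h2
        rw [hsnocj] at hg
        exact (hw _).trans hg.symm
    constructor
    · intro hA y'
      rw [hconjB y']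
      intro j hguard
      have hgA : CloseTo l t (y' : A)
          (Sum.elim (fun _ : Fin 1 => a) (Fin.snoc (α := fun _ => A) w (y' : A)) (tgt j)) := by
        have h2 := closeTo_down _ _ _ hguard
        rwa [htgtval y' j] at h2
      have hboundy : CloseTo l ((kk + 1) * 4 ^ D) a (y' : A) := by
        refine (htgtbound _ j hgA).mono ?_
        have : (kk + 1) * 4 ^ D = kk * 4 ^ D + 4 ^ D := by ring
        omega
      have hTr := (hconjA (y' : A)).1 (hA (y' : A)) j hgA
      refine (ih (ext c j) (Fin.snoc w (y' : A)) (by omega) ?_ (Fin.snoc wB y') ?_ aB haB).1 hTr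
      · intro i
        refine Fin.lastCases ?_ ?_ i
        · rw [Fin.snoc_last]
          exact hboundy
        · intro b
          rw [Fin.snoc_castSucc]
          exact (hw b).mono (Nat.mul_le_mul_right _ (by omega))
      · intro i
        rw [snoc_val]
        refine Fin.lastCases ?_ ?_ i
        · rw [Fin.snoc_last, Fin.snoc_last]
        · intro b
          rw [Fin.snoc_castSucc, Fin.snoc_castSucc]
          exact hwB b
    · intro hB y
      rw [hconjA y]
      intro j hguard
      have hboundy : CloseTo l (kk * 4 ^ D + t) a y := htgtbound y j hguard
      have hymem : y ∈ ballSet L (fun _ : Fin 1 => a) T := by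
        refine closeTo_mem_ball hboundy ?_
        calc kk * 4 ^ D + t ≤ (D + 2) * 4 ^ (D+1) := by
              have : kk * 4 ^ D + 4 ^ D ≤ (kk+1) * 4 ^ D := by ring_nf; omega
              omega
          _ ≤ T := by omega
      set yB : ballSet L (fun _ : Fin 1 => a) T := ⟨y, hymem⟩ with hyB
      have hgB : CloseTo l t yB (Sum.elim (fun _ : Fin 1 => aB) (Fin.snoc wB yB) (tgt j)) := by
        have harith : kk * 4 ^ D + t + t + 1 ≤ T := by
          have h2 : kk * 4 ^ D + 4 ^ D + 4 ^ D ≤ (kk + 2) * 4 ^ D := by ring_nf; omega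
          have h3 : (kk + 2) * 4 ^ D ≤ (D + 2) * 4 ^ (D + 1) := by
            refine Nat.mul_le_mul (by omega) (hpow _ _ (by omega))
          omega
        have hmem2 : Sum.elim (fun _ : Fin 1 => a) (Fin.snoc (α := fun _ => A) w y) (tgt j) ∈
            ballSet L (fun _ : Fin 1 => a) T :=
          closeTo_mem_ball (hboundy.trans hguard) (by omega)
        have hup := closeTo_up t (kk * 4 ^ D + t) y
          (Sum.elim (fun _ : Fin 1 => a) (Fin.snoc (α := fun _ => A) w y) (tgt j))
          hboundy hguard (by omega) hymem hmem2
        have hval : (⟨Sum.elim (fun _ : Fin 1 => a) (Fin.snoc (α := fun _ => A) w y) (tgt j),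
            hmem2⟩ : ballSet L (fun _ : Fin 1 => a) T) =
            Sum.elim (fun _ : Fin 1 => aB) (Fin.snoc wB yB) (tgt j) :=
          Subtype.ext (htgtval yB j).symm
        rwa [hval] at hup
      have hTr := (hconjB yB).1 (hB yB) j hgB
      refine (ih (ext c j) (Fin.snoc w y) (by omega) ?_ (Fin.snoc wB yB) ?_ aB haB).2 hTr
      · intro i
        refine Fin.lastCases ?_ ?_ i
        · rw [Fin.snoc_last]
          refine hboundy.mono ?_
          have : (kk + 1) * 4 ^ D = kk * 4 ^ D + 4 ^ D := by ring
          omega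
        · intro b
          rw [Fin.snoc_castSucc]
          exact (hw b).mono (Nat.mul_le_mul_right _ (by omega))
      · intro i
        rw [snoc_val]
        refine Fin.lastCases ?_ ?_ i
        · rw [Fin.snoc_last, Fin.snoc_last]
        · intro b
          rw [Fin.snoc_castSucc, Fin.snoc_castSucc]
          exact hwB b

end Stmt6Aux

namespace Stmt6Aux

open FirstOrder FirstOrder.Language FirstOrder.Language.BoundedFormula

variable {L : FirstOrder.Language} [L.IsRelational]

attribute [local instance] inducedStructure

lemma Tr_isTLocal (θ : L.Sentence) :
    IsTLocal L (Tr (relList θ) (fun i => i) θ : L.Formula (Fin 1))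
      ((qd θ + 2) * 4 ^ (qd θ + 1) + qd θ + 2) := by
  intro A _ v
  obtain ⟨a, rfl⟩ : ∃ a, v = fun _ => a :=
    ⟨v 0, funext fun i => by rw [Subsingleton.elim i 0]⟩
  set D := qd θ with hD
  set T := (D + 2) * 4 ^ (D + 1) + D + 2 with hT
  have key := Tr_local (l := relList θ) (D := D) (T := T) a (le_refl T) θ (fun i => i)
    (fun i => i.elim0) (by omega) (fun i => i.elim0)
    (fun i => i.elim0) (fun i => i.elim0)
    ⟨a, mem_ballSet_self L (fun _ : Fin 1 => a) T 0⟩ rfl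
  show (Tr (relList θ) (fun i => i) θ).Realize (fun _ => a) default ↔
    (Tr (relList θ) (fun i => i) θ).Realize
      (fun i => (⟨a, mem_ballSet_self L (fun _ : Fin 1 => a) T i⟩ :
        ballSet L (fun _ : Fin 1 => a) T)) default
  have h1 : (default : Fin 0 → A) = fun i => i.elim0 := funext fun i => i.elim0
  have h2 : (default : Fin 0 → (ballSet L (fun _ : Fin 1 => a) T)) = fun i => i.elim0 :=
    funext fun i => i.elim0
  have h3 : (fun i : Fin 1 => (⟨a, mem_ballSet_self L (fun _ : Fin 1 => a) T i⟩ :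
      ballSet L (fun _ : Fin 1 => a) T)) =
      fun _ : Fin 1 => (⟨a, mem_ballSet_self L (fun _ : Fin 1 => a) T 0⟩ :
        ballSet L (fun _ : Fin 1 => a) T) :=
    funext fun i => Subtype.ext rfl
  rw [h1, h2, h3]
  exact key

lemma Tr_isLocal (θ : L.Sentence) :
    IsLocal L (Tr (relList θ) (fun i => i) θ : L.Formula (Fin 1)) :=
  ⟨_, Tr_isTLocal θ⟩

lemma Tr_iff (θ : L.Sentence) {A : Type} [L.Structure A]
    (htrans : VertexTransitive L A)
    (hfar : ∃ S : Finset A, qd θ + 1 ≤ S.card ∧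
      (S : Set A).Pairwise (fun x y => FarApart L x y (2 * 4 ^ (qd θ + 2))))
    (a : A) :
    (A ⊨ θ) ↔ Formula.Realize (M := A) (Tr (relList θ) (fun i => i) θ)
      (fun _ : Fin 1 => a) := by
  have key := Tr_correct (l := relList θ) (D := qd θ) a htrans hfar θ (fun i => i)
    (fun i => Fin.elim0 i) (fun i => Fin.elim0 i) (fun i => Fin.elim0 i)
    (by omega) (fun R hR => hR) (fun i => Fin.elim0 i) (fun i _ _ => Fin.elim0 i)
    (fun i _ _ => Fin.elim0 i)
  have h1 : (A ⊨ θ) ↔ BoundedFormula.Realize θ (Empty.elim : Empty → A)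
      (fun i : Fin 0 => Fin.elim0 i) := by
    show BoundedFormula.Realize θ (default : Empty → A) (default : Fin 0 → A) ↔ _
    rw [show (default : Empty → A) = (Empty.elim : Empty → A) from funext fun e => e.elim,
      show (default : Fin 0 → A) = fun i : Fin 0 => Fin.elim0 i from funext fun i => Fin.elim0 i]
  have h2 : Formula.Realize (M := A) (Tr (relList θ) (fun i => i) θ)
      (fun _ : Fin 1 => a) ↔
      BoundedFormula.Realize (Tr (relList θ) (fun i => i) θ) (fun _ : Fin 1 => a)
        (fun i : Fin 0 => Fin.elim0 i) := by
    show BoundedFormula.Realize (Tr (relList θ) (fun i => i) θ) (fun _ : Fin 1 => a)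
      (default : Fin 0 → A) ↔ _
    rw [show (default : Fin 0 → A) = fun i : Fin 0 => Fin.elim0 i from funext fun i => Fin.elim0 i]
  rw [h1, h2]
  exact key

end Stmt6Aux


open Stmt6Aux

/-- For every sentence θ over a countable relational language there exist
integers r, m and a local formula φ(x) with a single free variable such that for every
finite vertex-transitive structure A containing at least m elements pairwise at Gaifman
distance greater than 2r, the statements A ⊨ θ, A ⊨ ∃x φ(x), A ⊨ ∀x φ(x) and ⟨φ,A⟩ = 1
are all equivalent. -/
theorem stmt6 (L : FirstOrder.Language) [Countable L.Symbols] [L.IsRelational]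
    (θ : L.Sentence) :
    ∃ (r m : ℕ) (φ : L.Formula (Fin 1)), IsLocal L φ ∧
      ∀ (A : Type) [L.Structure A] [Finite A] [Nonempty A],
        VertexTransitive L A →
        (∃ S : Finset A, m ≤ S.card ∧
          (S : Set A).Pairwise (fun a b => FarApart L a b (2 * r))) →
        ((A ⊨ θ ↔ ∃ a : A, φ.Realize (fun _ => a)) ∧
         (A ⊨ θ ↔ ∀ a : A, φ.Realize (fun _ => a)) ∧
         (A ⊨ θ ↔ stonePairing L A φ = 1)) := by
  classical
  refine ⟨4 ^ (qd θ + 2), qd θ + 1, Tr (relList θ) (fun i => i) θ, Tr_isLocal θ,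
    fun A _ _ _ htrans hfar => ?_⟩
  set φ : L.Formula (Fin 1) := Tr (relList θ) (fun i => i) θ with hφ
  have hiff : ∀ a : A, (A ⊨ θ) ↔ φ.Realize (fun _ => a) := fun a => Tr_iff θ htrans hfar a
  obtain ⟨a₀⟩ := ‹Nonempty A›
  have hfix : ∀ v : Fin 1 → A, φ.Realize v ↔ φ.Realize (fun _ => v 0) := by
    intro v
    have hv : v = fun _ => v 0 := funext fun i => congrArg v (Subsingleton.elim i 0)
    rw [hv]
  refine ⟨⟨fun h => ⟨a₀, (hiff a₀).1 h⟩, fun ⟨a, ha⟩ => (hiff a).2 ha⟩,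
    ⟨fun h a => (hiff a).1 h, fun h => (hiff a₀).2 (h a₀)⟩, ?_⟩
  constructor
  · intro h
    have hall : ∀ v : Fin 1 → A, φ.Realize v := fun v => (hfix v).2 ((hiff (v 0)).1 h)
    rw [stonePairing]
    have hcard : Nat.card {v : Fin 1 → A // φ.Realize v} = Nat.card A := by
      rw [Nat.card_congr (Equiv.subtypeUnivEquiv hall)]
      exact Nat.card_congr (Equiv.funUnique (Fin 1) A)
    rw [hcard, pow_one]
    have hne : (Nat.card A : ℝ) ≠ 0 := Nat.cast_ne_zero.2 Nat.card_pos.ne'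
    field_simp
  · intro hp
    by_contra hθ
    have hnone : ∀ v : Fin 1 → A, ¬ φ.Realize v := fun v hv =>
      hθ ((hiff (v 0)).2 ((hfix v).1 hv))
    have hempty : IsEmpty {v : Fin 1 → A // φ.Realize v} := ⟨fun ⟨v, hv⟩ => hnone v hv⟩
    have hzero : Nat.card {v : Fin 1 → A // φ.Realize v} = 0 := Nat.card_of_isEmpty
    rw [stonePairing, hzero] at hp
    norm_num at hp
end

section
/- Let (G_n)_{n∈ℕ} be a sequence of finite nonempty simple graphs, regarded as structures over the language of graphs with one binary relation symbol interpreted as adjacency. Then (t(F,G_n))_n converges for every finite simple graph F if and only if (⟨φ,G_n⟩)_n converges for every quantifier-free first-order formula φ that does not use the equality symbol. -/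
open Filter Topology

/-- homomorphism density t(F,G) -/
noncomputable def homDensity {W V : Type*} (F : SimpleGraph W) (G : SimpleGraph V) : ℝ :=
  (Nat.card (F →g G) : ℝ) / (Nat.card V : ℝ) ^ (Nat.card W)

open FirstOrder

/-- a bounded formula does not use the equality symbol -/
def NoEq {L : FirstOrder.Language} {α : Type*} : ∀ {n : ℕ}, L.BoundedFormula α n → Prop
  | _, .falsum => True
  | _, .equal _ _ => False
  | _, .rel _ _ => True
  | _, .imp f g => NoEq f ∧ NoEq g
  | _, .all f => NoEq f

open FirstOrder Language Structure

section helpers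

variable {α : Type*} {n : ℕ}

lemma noEq_imp {L : FirstOrder.Language} {f g : L.BoundedFormula α n} :
    NoEq (f.imp g) ↔ NoEq f ∧ NoEq g := Iff.rfl

lemma noEq_bot {L : FirstOrder.Language} : NoEq (⊥ : L.BoundedFormula α n) := trivial

lemma noEq_not {L : FirstOrder.Language} {f : L.BoundedFormula α n} (hf : NoEq f) :
    NoEq f.not := ⟨hf, trivial⟩

lemma noEq_top {L : FirstOrder.Language} : NoEq (⊤ : L.BoundedFormula α n) :=
  noEq_not noEq_bot

lemma noEq_inf {L : FirstOrder.Language} {f g : L.BoundedFormula α n}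
    (hf : NoEq f) (hg : NoEq g) : NoEq (f ⊓ g) :=
  noEq_not ⟨hf, noEq_not hg⟩

/-- every term in the graph language is a variable -/
lemma graph_term_var {β : Type*} (t : Language.graph.Term β) : ∃ a, t = Term.var a := by
  cases t with
  | var a => exact ⟨a, rfl⟩
  | func f ts => exact f.elim

lemma fin2_eta {M : Type*} (x : Fin 2 → M) : x = ![x 0, x 1] := by
  funext i; fin_cases i <;> rfl

lemma realize_adj_rel {M : Type*} [Language.graph.Structure M]
    (ts : Fin 2 → Language.graph.Term (α ⊕ Fin n)) (a₀ a₁ : α ⊕ Fin n)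
    (h₀ : ts 0 = Term.var a₀) (h₁ : ts 1 = Term.var a₁)
    (v : α → M) (xs : Fin n → M) :
    (Relations.boundedFormula Language.graphRel.adj ts).Realize v xs ↔
      RelMap adj ![Sum.elim v xs a₀, Sum.elim v xs a₁] := by
  have e : (fun i => Term.realize (Sum.elim v xs) (ts i)) =
      ![Sum.elim v xs a₀, Sum.elim v xs a₁] := by
    funext i; fin_cases i
    · simp [h₀]
    · simp [h₁]
  show RelMap adj (fun i => Term.realize (Sum.elim v xs) (ts i)) ↔ _
  rw [e]

/-- realization of quantifier-free equality-free graph formulas only depends on the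
adjacency pattern of the assignment -/
lemma realize_qf_noeq_iff {M N : Type*} [Language.graph.Structure M]
    [Language.graph.Structure N]
    (φ : Language.graph.BoundedFormula α n) (hqf : φ.IsQF) (hne : NoEq φ)
    (v : α → M) (xs : Fin n → M) (w : α → N) (ys : Fin n → N)
    (h : ∀ a b : α ⊕ Fin n,
      RelMap adj ![Sum.elim v xs a, Sum.elim v xs b] ↔
      RelMap adj ![Sum.elim w ys a, Sum.elim w ys b]) :
    (φ.Realize v xs ↔ φ.Realize w ys) := by
  induction hqf with
  | falsum => simp [BoundedFormula.Realize]
  | of_isAtomic h' =>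
    cases h' with
    | equal t₁ t₂ => exact absurd hne (by simp [NoEq, Term.bdEqual])
    | rel R ts =>
      cases R
      obtain ⟨a₀, h₀⟩ := graph_term_var (ts 0)
      obtain ⟨a₁, h₁⟩ := graph_term_var (ts 1)
      rw [realize_adj_rel ts a₀ a₁ h₀ h₁ v xs, realize_adj_rel ts a₀ a₁ h₀ h₁ w ys]
      exact h a₀ a₁
  | imp h₁ h₂ ih₁ ih₂ =>
    rw [noEq_imp] at hne
    simp only [BoundedFormula.realize_imp]
    rw [ih₁ hne.1, ih₂ hne.2]

end helpers

section patt

open Classical in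
noncomputable instance (p : ℕ) : Fintype (SimpleGraph (Fin p)) := by
  classical infer_instance

/-- the adjacency pattern graph of a tuple -/
def patt {V : Type*} (G : SimpleGraph V) {p : ℕ} (v : Fin p → V) : SimpleGraph (Fin p) where
  Adj i j := G.Adj (v i) (v j)
  symm := ⟨fun i j hij => hij.symm⟩
  loopless := ⟨fun i hi => G.loopless.irrefl _ hi⟩

open Classical in
noncomputable def mfun {p : ℕ} (S : SimpleGraph (Fin p)) : SimpleGraph (Fin p) → ℝ :=
  fun H => if S ≤ H then 1 else 0

lemma mfun_mul {p : ℕ} (S T : SimpleGraph (Fin p)) : mfun S * mfun T = mfun (S ⊔ T) := by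
  classical
  funext H
  simp only [Pi.mul_apply, mfun, sup_le_iff]
  by_cases hS : S ≤ H <;> by_cases hT : T ≤ H <;> simp [hS, hT]

lemma mfun_bot {p : ℕ} : mfun (⊥ : SimpleGraph (Fin p)) = 1 := by
  funext H
  simp [mfun]

/-- a single-edge graph -/
def edgeG {p : ℕ} (c₀ c₁ : Fin p) (hne : c₀ ≠ c₁) : SimpleGraph (Fin p) where
  Adj i j := (i = c₀ ∧ j = c₁) ∨ (i = c₁ ∧ j = c₀)
  symm := ⟨fun i j hij => by tauto⟩
  loopless := ⟨fun i hi => by rcases hi with ⟨h1, h2⟩ | ⟨h1, h2⟩ <;> exact hne (h1 ▸ h2 ▸ rfl)⟩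

lemma edgeG_le_iff {p : ℕ} (c₀ c₁ : Fin p) (hne : c₀ ≠ c₁) (H : SimpleGraph (Fin p)) :
    edgeG c₀ c₁ hne ≤ H ↔ H.Adj c₀ c₁ := by
  constructor
  · intro h; exact h (Or.inl ⟨rfl, rfl⟩)
  · intro h i j hij
    rcases hij with ⟨h1, h2⟩ | ⟨h1, h2⟩
    · exact h1 ▸ h2 ▸ h
    · exact h1 ▸ h2 ▸ h.symm

open Classical in
noncomputable def fphi {p : ℕ} (φ : Language.graph.Formula (Fin p)) :
    SimpleGraph (Fin p) → ℝ :=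
  fun H => if (letI := H.structure; φ.Realize (fun i => i)) then 1 else 0

end patt

section span
open scoped Pointwise

lemma span_mfun_mul {p : ℕ} {a b : SimpleGraph (Fin p) → ℝ}
    (ha : a ∈ Submodule.span ℝ (Set.range (mfun (p := p))))
    (hb : b ∈ Submodule.span ℝ (Set.range (mfun (p := p)))) :
    a * b ∈ Submodule.span ℝ (Set.range (mfun (p := p))) := by
  have hss : (Set.range (mfun (p := p))) * (Set.range (mfun (p := p))) ⊆
      Set.range (mfun (p := p)) := by
    rintro x ⟨x₁, ⟨S, rfl⟩, x₂, ⟨T, rfl⟩, rfl⟩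
    exact ⟨S ⊔ T, (mfun_mul S T).symm⟩
  have h2 := Submodule.mul_mem_mul ha hb
  rw [Submodule.span_mul_span] at h2
  exact Submodule.span_le.mpr (hss.trans Submodule.subset_span) h2

lemma one_mem_span_mfun {p : ℕ} :
    (1 : SimpleGraph (Fin p) → ℝ) ∈ Submodule.span ℝ (Set.range (mfun (p := p))) :=
  mfun_bot ▸ Submodule.subset_span ⟨⊥, rfl⟩

lemma fphi_mem {p : ℕ} (φ : Language.graph.Formula (Fin p)) (hqf : φ.IsQF) (hne : NoEq φ) :
    fphi φ ∈ Submodule.span ℝ (Set.range (mfun (p := p))) := by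
  revert hne
  induction hqf with
  | falsum =>
    intro _
    have : fphi (p := p) BoundedFormula.falsum = 0 := by
      funext H
      simp [fphi, Formula.Realize, BoundedFormula.Realize]
    rw [this]; exact Submodule.zero_mem _
  | of_isAtomic h' =>
    intro hne
    cases h' with
    | equal t₁ t₂ => exact absurd hne (by simp [NoEq, Term.bdEqual])
    | rel R ts =>
      cases R
      obtain ⟨a₀, h₀⟩ := graph_term_var (ts 0)
      obtain ⟨a₁, h₁⟩ := graph_term_var (ts 1)
      obtain ⟨c₀, rfl⟩ : ∃ c, a₀ = Sum.inl c := by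
        rcases a₀ with c | i; exact ⟨c, rfl⟩; exact i.elim0
      obtain ⟨c₁, rfl⟩ : ∃ c, a₁ = Sum.inl c := by
        rcases a₁ with c | i; exact ⟨c, rfl⟩; exact i.elim0
      have key : ∀ H : SimpleGraph (Fin p),
          (letI := H.structure;
            Formula.Realize (Relations.boundedFormula graphRel.adj ts) (fun i => i)) ↔
          H.Adj c₀ c₁ := by
        intro H
        letI := H.structure
        exact realize_adj_rel ts _ _ h₀ h₁ (fun i => i) default
      by_cases hcc : c₀ = c₁
      · have : fphi (Relations.boundedFormula graphRel.adj ts) = 0 := by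
          funext H
          have := key H
          subst hcc
          simp only [fphi]
          rw [if_neg]
          · rfl
          · rw [this]; exact H.loopless.irrefl c₀
        rw [this]; exact Submodule.zero_mem _
      · have : fphi (Relations.boundedFormula graphRel.adj ts) = mfun (edgeG c₀ c₁ hcc) := by
          funext H
          simp only [fphi, mfun]
          by_cases hA : H.Adj c₀ c₁
          · rw [if_pos ((key H).mpr hA), if_pos ((edgeG_le_iff c₀ c₁ hcc H).mpr hA)]
          · rw [if_neg (fun h => hA ((key H).mp h)),
              if_neg (fun h => hA ((edgeG_le_iff c₀ c₁ hcc H).mp h))]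
        rw [this]
        exact Submodule.subset_span ⟨_, rfl⟩
  | imp hq₁ hq₂ ih₁ ih₂ =>
    intro hne
    rw [noEq_imp] at hne
    rename_i φ₁ φ₂
    have h₁ := ih₁ hne.1
    have h₂ := ih₂ hne.2
    have : fphi (φ₁.imp φ₂) = 1 - fphi φ₁ + fphi φ₁ * fphi φ₂ := by
      funext H
      letI := H.structure
      simp only [fphi, Pi.add_apply, Pi.sub_apply, Pi.one_apply, Pi.mul_apply]
      have : (Formula.Realize (φ₁.imp φ₂) (fun i => i) : Prop) ↔
          (Formula.Realize φ₁ (fun i => i) → Formula.Realize φ₂ (fun i => i)) :=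
        BoundedFormula.realize_imp
      rw [this]
      by_cases hp : Formula.Realize φ₁ (fun i => i) <;>
        by_cases hq : Formula.Realize φ₂ (fun i => i) <;>
        simp [hp, hq]
    rw [this]
    exact Submodule.add_mem _ (Submodule.sub_mem _ one_mem_span_mfun h₁) (span_mfun_mul h₁ h₂)

end span

section counting

open Classical in
lemma card_subtype_real {β : Type*} [Fintype β] (P : β → Prop) :
    (Nat.card {x // P x} : ℝ) = ∑ x : β, if P x then (1 : ℝ) else 0 := by
  classical
  rw [Finset.sum_boole, Nat.card_eq_fintype_card, Fintype.card_subtype]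

lemma card_hom_real {V : Type*} [Fintype V] (G : SimpleGraph V) {p : ℕ}
    (S : SimpleGraph (Fin p)) :
    (Nat.card (S →g G) : ℝ) = ∑ v : Fin p → V, mfun S (patt G v) := by
  classical
  have e : (S →g G) ≃ {v : Fin p → V // S ≤ patt G v} :=
    { toFun := fun f => ⟨f, fun i j hij => f.map_rel' hij⟩
      invFun := fun x => ⟨x.1, fun {i j} hij => x.2 hij⟩
      left_inv := fun f => rfl
      right_inv := fun x => rfl }
  rw [Nat.card_congr e, card_subtype_real]
  refine Finset.sum_congr rfl fun v _ => ?_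
  by_cases h : S ≤ patt G v <;> simp [mfun, h]

lemma realize_patt {V : Type*} (G : SimpleGraph V) {p : ℕ}
    (φ : Language.graph.Formula (Fin p)) (hqf : φ.IsQF) (hne : NoEq φ) (v : Fin p → V) :
    (letI := G.structure; φ.Realize v) ↔
    (letI := (patt G v).structure; φ.Realize (fun i => i)) := by
  letI := G.structure
  letI := (patt G v).structure
  refine realize_qf_noeq_iff (M := V) (N := Fin p) φ hqf hne v default (fun i => i) default ?_
  rintro (a | a) (b | b)
  · exact Iff.rfl
  · exact b.elim0
  · exact a.elim0
  · exact a.elim0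

lemma stonePairing_eq_sum {V : Type*} [Fintype V] [Nonempty V] (G : SimpleGraph V) {p : ℕ}
    (φ : Language.graph.Formula (Fin p)) (hqf : φ.IsQF) (hne : NoEq φ)
    (c : SimpleGraph (Fin p) → ℝ) (hc : ∑ S, c S • mfun S = fphi φ) :
    (letI := G.structure; stonePairing Language.graph V φ) =
      ∑ S : SimpleGraph (Fin p), c S * homDensity S G := by
  classical
  letI := G.structure
  have hnum : (Nat.card {v : Fin p → V // φ.Realize v} : ℝ)
      = ∑ S : SimpleGraph (Fin p), c S * (Nat.card (S →g G) : ℝ) := by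
    rw [card_subtype_real]
    have step1 : ∀ v : Fin p → V,
        (if φ.Realize v then (1 : ℝ) else 0) = fphi φ (patt G v) := by
      intro v
      simp only [fphi]
      by_cases h : φ.Realize v
      · rw [if_pos h, if_pos ((realize_patt G φ hqf hne v).mp h)]
      · rw [if_neg h, if_neg (fun h' => h ((realize_patt G φ hqf hne v).mpr h'))]
    calc (∑ v : Fin p → V, if φ.Realize v then (1 : ℝ) else 0)
        = ∑ v : Fin p → V, fphi φ (patt G v) := Finset.sum_congr rfl fun v _ => step1 v
      _ = ∑ v : Fin p → V, ∑ S : SimpleGraph (Fin p), c S * mfun S (patt G v) := by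
          refine Finset.sum_congr rfl fun v _ => ?_
          rw [← hc]
          simp [Finset.sum_apply]
      _ = ∑ S : SimpleGraph (Fin p), ∑ v : Fin p → V, c S * mfun S (patt G v) :=
          Finset.sum_comm
      _ = ∑ S : SimpleGraph (Fin p), c S * (Nat.card (S →g G) : ℝ) := by
          refine Finset.sum_congr rfl fun S _ => ?_
          rw [card_hom_real, Finset.mul_sum]
  rw [stonePairing, hnum, Finset.sum_div]
  refine Finset.sum_congr rfl fun S _ => ?_
  rw [homDensity]
  have : Nat.card (Fin p) = p := by simp
  rw [this, mul_div_assoc]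

end counting

section conj

/-- conjunction of adjacency atoms over a list of pairs -/
def adjConj {p : ℕ} (l : List (Fin p × Fin p)) : Language.graph.Formula (Fin p) :=
  (l.map fun q => Relations.formula₂ adj (Term.var q.1) (Term.var q.2)).foldr (· ⊓ ·) ⊤

lemma adjConj_isQF {p : ℕ} (l : List (Fin p × Fin p)) : (adjConj l).IsQF := by
  induction l with
  | nil => exact BoundedFormula.IsQF.top
  | cons q l ih =>
    exact BoundedFormula.IsQF.inf (BoundedFormula.IsAtomic.rel _ _).isQF ih

lemma adjConj_noEq {p : ℕ} (l : List (Fin p × Fin p)) : NoEq (adjConj l) := by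
  induction l with
  | nil => exact noEq_top
  | cons q l ih => exact noEq_inf trivial ih

lemma adjConj_realize {V : Type*} (G : SimpleGraph V) {p : ℕ} (l : List (Fin p × Fin p))
    (v : Fin p → V) :
    (letI := G.structure; (adjConj l).Realize v) ↔ ∀ q ∈ l, G.Adj (v q.1) (v q.2) := by
  letI := G.structure
  refine (BoundedFormula.realize_foldr_inf _ v default).trans ?_
  simp only [List.forall_mem_map]
  refine forall_congr' fun q => forall_congr' fun hq => ?_
  exact (Formula.realize_rel₂ (R := adj)
    (t₁ := (Term.var q.1 : Language.graph.Term (Fin p))) (t₂ := Term.var q.2)).trans Iff.rfl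

lemma stone_eq_homDensity {V : Type*} (G : SimpleGraph V) {p : ℕ}
    (F' : SimpleGraph (Fin p)) (l : List (Fin p × Fin p))
    (hl : ∀ q : Fin p × Fin p, q ∈ l ↔ F'.Adj q.1 q.2) :
    (letI := G.structure; stonePairing Language.graph V (adjConj l)) = homDensity F' G := by
  letI := G.structure
  rw [stonePairing, homDensity]
  have hcard : Nat.card {v : Fin p → V // (adjConj l).Realize v} = Nat.card (F' →g G) := by
    apply Nat.card_congr
    exact
      { toFun := fun x => ⟨x.1, fun {i j} hij =>
          (adjConj_realize G l x.1).mp x.2 (i, j) ((hl (i, j)).mpr hij)⟩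
        invFun := fun f => ⟨f, (adjConj_realize G l f).mpr fun q hq => f.map_rel' ((hl q).mp hq)⟩
        left_inv := fun x => rfl
        right_inv := fun f => rfl }
  rw [hcard, show Nat.card (Fin p) = p by simp]

lemma card_hom_map {W V : Type*} (F : SimpleGraph W) (G : SimpleGraph V) {p : ℕ} (e : W ≃ Fin p) :
    Nat.card (F.map e.toEmbedding →g G) = Nat.card (F →g G) := by
  apply Nat.card_congr
  let iso : F ≃g F.map e.toEmbedding := SimpleGraph.Iso.map e F
  exact
    { toFun := fun f => f.comp iso.toHom
      invFun := fun g => g.comp iso.symm.toHom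
      left_inv := fun f => by
        ext x
        simp [SimpleGraph.Hom.comp]
      right_inv := fun g => by
        ext x
        simp [SimpleGraph.Hom.comp] }

end conj

/-- for a sequence of finite nonempty simple graphs, convergence of all
homomorphism densities (left-convergence) is equivalent to convergence of the Stone
pairings of all quantifier-free formulas not using equality. -/
theorem stmt9 (V : ℕ → Type) [∀ n, Finite (V n)] [∀ n, Nonempty (V n)]
    (G : ∀ n, SimpleGraph (V n)) :
    (∀ (W : Type) (_ : Finite W) (F : SimpleGraph W),
      ∃ r : ℝ, Tendsto (fun n => homDensity F (G n)) atTop (𝓝 r)) ↔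
    (∀ (p : ℕ) (φ : Language.graph.Formula (Fin p)), φ.IsQF → NoEq φ →
      ∃ r : ℝ, Tendsto
        (fun n => letI := (G n).structure; stonePairing Language.graph (V n) φ)
        atTop (𝓝 r)) := by
  constructor
  · intro h p φ hqf hne
    obtain ⟨c, hc⟩ := (Submodule.mem_span_range_iff_exists_fun ℝ).1 (fphi_mem φ hqf hne)
    choose r hr using fun S : SimpleGraph (Fin p) => h (Fin p) inferInstance S
    refine ⟨∑ S, c S * r S, ?_⟩
    have key : (fun n => letI := (G n).structure; stonePairing Language.graph (V n) φ) =
        fun n => ∑ S : SimpleGraph (Fin p), c S * homDensity S (G n) := by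
      funext n
      letI : Fintype (V n) := Fintype.ofFinite _
      exact stonePairing_eq_sum (G n) φ hqf hne c hc
    rw [key]
    exact tendsto_finset_sum _ fun S _ => (hr S).const_mul (c S)
  · intro h W hW F
    haveI := hW
    classical
    set p := Nat.card W with hp
    let e : W ≃ Fin p := Finite.equivFin W
    let F' := F.map e.toEmbedding
    let l : List (Fin p × Fin p) :=
      (Finset.univ.filter fun q : Fin p × Fin p => F'.Adj q.1 q.2).toList
    have hl : ∀ q : Fin p × Fin p, q ∈ l ↔ F'.Adj q.1 q.2 := by
      intro q; simp [l]
    obtain ⟨r, hr⟩ := h p (adjConj l) (adjConj_isQF l) (adjConj_noEq l)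
    refine ⟨r, ?_⟩
    refine hr.congr fun n => ?_
    rw [stone_eq_homDensity (G n) F' l hl]
    rw [homDensity, homDensity, card_hom_map F (G n) e, show Nat.card (Fin p) = p by simp, hp]
end

section
/- Let F_1,…,F_ℓ be pairwise non-isomorphic finite simple graphs and let a_1,…,a_ℓ be real numbers such that Σ_{i=1}^ℓ a_i · hom(F_i,G) = 0 for every finite simple graph G. Then a_1 = a_2 = … = a_ℓ = 0; that is, the graph parameters hom(F,·), for F ranging over pairwise non-isomorphic finite simple graphs, are linearly independent. -/
open Function

section Aux

instance setoidFinite (α : Type) [Finite α] : Finite (Setoid α) :=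
  Finite.of_injective (fun s => (fun x y => s x y : α → α → Prop)) fun _ _ h => Setoid.ext fun x y =>
    iff_of_eq (congrFun (congrFun h x) y)

variable {W U : Type} (F : SimpleGraph W) (G : SimpleGraph U)

instance homFinite [Finite W] [Finite U] : Finite (F →g G) :=
  Finite.of_injective (fun f => (f : W → U)) DFunLike.coe_injective

private lemma natCard_sigma {ι : Type} [Fintype ι] (f : ι → Type) [∀ i, Finite (f i)] :
    Nat.card ((i : ι) × f i) = ∑ i, Nat.card (f i) := by
  letI : ∀ i, Fintype (f i) := fun i => Fintype.ofFinite (f i)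
  rw [Nat.card_eq_fintype_card, Fintype.card_sigma]
  exact Finset.sum_congr rfl fun i _ => (Nat.card_eq_fintype_card).symm

/-- quotient graph -/
def quotGraph (s : Setoid W) : SimpleGraph (Quotient s) where
  Adj x y := x ≠ y ∧ ∃ u v, F.Adj u v ∧ Quotient.mk s u = x ∧ Quotient.mk s v = y
  symm := ⟨by rintro x y ⟨hne, u, v, hadj, hu, hv⟩; exact ⟨hne.symm, v, u, hadj.symm, hv, hu⟩⟩
  loopless := ⟨by rintro x ⟨hne, _⟩; exact hne rfl⟩

/-- setoids whose classes are independent sets -/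
def GoodSetoid : Type := {s : Setoid W // ∀ u v, F.Adj u v → ¬ s u v}

instance goodSetoidFinite [Finite W] : Finite (GoodSetoid F) :=
  Subtype.finite

/-- the kernel of a hom is a good setoid -/
def homKer (f : F →g G) : GoodSetoid F :=
  ⟨Setoid.ker f, fun u v hadj h => (G.ne_of_adj (f.map_adj hadj)) h⟩

/-- fiber of homKer over a good setoid s ≃ injective homs from the quotient graph -/
noncomputable def fiberEquiv (s : GoodSetoid F) :
    {f : F →g G // homKer F G f = s} ≃ {g : quotGraph F s.1 →g G // Function.Injective ⇑g} where
  toFun := fun ⟨f, hf⟩ =>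
    have hker : Setoid.ker ⇑f = s.1 := congrArg Subtype.val hf
    ⟨⟨Quotient.lift ⇑f (fun a b hab => by
        have : Setoid.ker ⇑f a b := by rw [hker]; exact hab
        exact this), by
      rintro x y ⟨hne, u, v, hadj, hu, hv⟩
      subst hu; subst hv
      exact f.map_adj hadj⟩, by
      rintro ⟨x⟩ ⟨y⟩ hxy
      have : Setoid.ker ⇑f x y := hxy
      rw [hker] at this
      exact Quotient.sound this⟩
  invFun := fun ⟨g, hg⟩ =>
    ⟨SimpleGraph.Hom.comp g ⟨Quotient.mk s.1, fun {u v} hadj =>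
        ⟨fun h => s.2 u v hadj (Quotient.eq.mp h), u, v, hadj, rfl, rfl⟩⟩, by
      apply Subtype.ext
      apply Setoid.ext
      intro x y
      constructor
      · intro hxy
        exact Quotient.eq.mp (hg hxy)
      · intro hxy
        show g _ = g _
        exact congrArg g (Quotient.sound hxy)⟩
  left_inv := fun ⟨f, hf⟩ => Subtype.ext (DFunLike.ext _ _ fun w => rfl)
  right_inv := fun ⟨g, hg⟩ => Subtype.ext (DFunLike.ext _ _ fun x => by
    induction x using Quotient.ind
    rfl)

lemma card_hom_eq_sum [Finite W] [Finite U] [Fintype (GoodSetoid F)] :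
    Nat.card (F →g G) =
      ∑ s : GoodSetoid F, Nat.card {g : quotGraph F s.1 →g G // Function.Injective ⇑g} := by
  rw [Nat.card_congr (Equiv.sigmaFiberEquiv (homKer F G)).symm, natCard_sigma]
  exact Finset.sum_congr rfl fun s _ => Nat.card_congr (fiberEquiv F G s)

end Aux

section B
variable {W U : Type} {F : SimpleGraph W} {G : SimpleGraph U}

lemma vcard_le [Finite U] (f : F →g G) (hf : Injective ⇑f) : Nat.card W ≤ Nat.card U :=
  Nat.card_le_card_of_injective ⇑f hf

lemma ecard_le [Finite U] (f : F →g G) (hf : Injective ⇑f) :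
    Nat.card F.edgeSet ≤ Nat.card G.edgeSet :=
  Nat.card_le_card_of_injective f.mapEdgeSet
    (fun _ _ h => Subtype.ext (Sym2.map.injective hf (congrArg Subtype.val h)))

lemma iso_of_inj [Finite W] [Finite U] (f : F →g G) (hf : Injective ⇑f)
    (hv : Nat.card U = Nat.card W) (he : Nat.card G.edgeSet = Nat.card F.edgeSet) :
    Nonempty (F ≃g G) := by
  have hbij : Bijective ⇑f := (Nat.bijective_iff_injective_and_card ⇑f).mpr ⟨hf, hv.symm⟩
  have hebij : Bijective f.mapEdgeSet :=
    (Nat.bijective_iff_injective_and_card f.mapEdgeSet).mpr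
      ⟨fun _ _ h => Subtype.ext (Sym2.map.injective hf (congrArg Subtype.val h)), he.symm⟩
  refine ⟨⟨Equiv.ofBijective ⇑f hbij, ?_⟩⟩
  intro u v
  constructor
  · intro hadj
    have hmem : s(f u, f v) ∈ G.edgeSet := hadj
    obtain ⟨⟨e, he'⟩, hmape⟩ := hebij.2 ⟨s(f u, f v), hmem⟩
    have h1 : Sym2.map ⇑f e = Sym2.map ⇑f s(u, v) := congrArg Subtype.val hmape
    have h2 := Sym2.map.injective hf h1
    rw [h2] at he'
    exact he'
  · exact fun h => f.map_adj h

/-- identity gives a positive injective-hom count -/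
lemma injhom_card_pos [Finite W] (F : SimpleGraph W) :
    0 < Nat.card {g : F →g F // Function.Injective ⇑g} := by
  haveI : Nonempty {g : F →g F // Function.Injective ⇑g} := ⟨⟨SimpleGraph.Hom.id, fun _ _ h => h⟩⟩
  exact Nat.card_pos

/-- iso invariance of injective-hom counts in the source -/
noncomputable def injhomEquiv {W' : Type} {F' : SimpleGraph W'} (φ : F ≃g F') :
    {g : F →g G // Function.Injective ⇑g} ≃ {g : F' →g G // Function.Injective ⇑g} where
  toFun := fun ⟨g, hg⟩ => ⟨g.comp φ.symm.toHom, hg.comp (φ.symm.injective)⟩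
  invFun := fun ⟨g, hg⟩ => ⟨g.comp φ.toHom, hg.comp (φ.injective)⟩
  left_inv := fun ⟨g, hg⟩ => Subtype.ext (DFunLike.ext _ _ fun w => by
    simp [SimpleGraph.Hom.comp])
  right_inv := fun ⟨g, hg⟩ => Subtype.ext (DFunLike.ext _ _ fun w => by
    simp [SimpleGraph.Hom.comp])

end B

section Quot
variable {W : Type} (F : SimpleGraph W)

/-- quotient by a discrete setoid is isomorphic to the original graph -/
noncomputable def quotIsoOfDiscrete (s : Setoid W) (hd : ∀ u v, s u v → u = v) :
    quotGraph F s ≃g F := by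
  refine ⟨⟨Quotient.lift id hd, Quotient.mk s, ?_, ?_⟩, ?_⟩
  · intro x; induction x using Quotient.ind; rfl
  · intro x; rfl
  · intro x y
    induction x using Quotient.ind with | _ u =>
    induction y using Quotient.ind with | _ v =>
    show F.Adj u v ↔ (quotGraph F s).Adj _ _
    constructor
    · intro hadj
      refine ⟨fun h => F.ne_of_adj hadj (hd u v (Quotient.eq.mp h)), u, v, hadj, rfl, rfl⟩
    · rintro ⟨hne, u', v', hadj, hu, hv⟩
      have hu' : u' = u := hd _ _ (Quotient.eq.mp hu)
      have hv' : v' = v := hd _ _ (Quotient.eq.mp hv)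
      rw [hu', hv'] at hadj; exact hadj

lemma discrete_of_card (s : Setoid W) [Finite W]
    (hcard : Nat.card (Quotient s) = Nat.card W) : ∀ u v, s u v → u = v := by
  have hbij : Bijective (Quotient.mk s) :=
    (Nat.bijective_iff_surjective_and_card _).mpr ⟨Quotient.mk_surjective, hcard.symm⟩
  exact fun u v h => hbij.1 (Quotient.sound h)

lemma quot_card_le (s : Setoid W) [Finite W] : Nat.card (Quotient s) ≤ Nat.card W :=
  Nat.card_le_card_of_surjective (Quotient.mk s) Quotient.mk_surjective

end Quot

open scoped Classical

lemma injLinIndep {ι : Type} [Fintype ι] (W : ι → Type) [hW : ∀ j, Finite (W j)]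
    (H : ∀ j, SimpleGraph (W j)) (c : ι → ℝ) :
    ∀ t : Finset ι,
      (∀ (U : Type) [Finite U] (G : SimpleGraph U),
        ∑ j ∈ t, c j * (Nat.card {f : H j →g G // Function.Injective ⇑f} : ℝ) = 0) →
      ∀ j ∈ t, ∑ k ∈ t.filter (fun k => Nonempty (H k ≃g H j)), c k = 0 := by
  intro t
  induction t using Finset.strongInduction with
  | _ t ih =>
  intro hrel j hj
  -- choose j₀ : lexicographically (vertices, edges) minimal element of t
  obtain ⟨j₁, hj₁t, hj₁min⟩ := t.exists_min_image (fun k => Nat.card (W k)) ⟨j, hj⟩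
  obtain ⟨j₀, hj₀m, hj₀min⟩ :=
    (t.filter fun k => Nat.card (W k) = Nat.card (W j₁)).exists_min_image
      (fun k => Nat.card (H k).edgeSet) ⟨j₁, Finset.mem_filter.mpr ⟨hj₁t, rfl⟩⟩
  obtain ⟨hj₀t, hj₀v⟩ := Finset.mem_filter.mp hj₀m
  have hvmin : ∀ k ∈ t, Nat.card (W j₀) ≤ Nat.card (W k) := fun k hk => hj₀v ▸ hj₁min k hk
  have hemin : ∀ k ∈ t, Nat.card (W k) = Nat.card (W j₀) →
      Nat.card (H j₀).edgeSet ≤ Nat.card (H k).edgeSet := fun k hk hkv =>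
    hj₀min k (Finset.mem_filter.mpr ⟨hk, by rw [hkv, hj₀v]⟩)
  set C := t.filter (fun k => Nonempty (H k ≃g H j₀)) with hCdef
  have hj₀C : j₀ ∈ C := Finset.mem_filter.mpr ⟨hj₀t, ⟨(SimpleGraph.Iso.refl : H j₀ ≃g H j₀)⟩⟩
  -- injective-hom count into H j₀ vanishes outside the iso class of j₀
  have hzero : ∀ k ∈ t, k ∉ C →
      Nat.card {f : H k →g H j₀ // Function.Injective ⇑f} = 0 := by
    intro k hk hkC
    rw [Nat.card_eq_zero]
    refine Or.inl ⟨?_⟩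
    rintro ⟨f, hf⟩
    have h2 : Nat.card (W k) = Nat.card (W j₀) := le_antisymm (vcard_le f hf) (hvmin k hk)
    have h3 : Nat.card (H k).edgeSet = Nat.card (H j₀).edgeSet :=
      le_antisymm (ecard_le f hf) (hemin k hk h2)
    obtain ⟨φ⟩ := iso_of_inj f hf h2.symm h3.symm
    exact hkC (Finset.mem_filter.mpr ⟨hk, ⟨φ⟩⟩)
  -- iso invariance of counts on C
  have hcardC : ∀ k ∈ C, ∀ (U : Type) [Finite U] (G : SimpleGraph U),
      Nat.card {f : H k →g G // Function.Injective ⇑f}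
        = Nat.card {f : H j₀ →g G // Function.Injective ⇑f} := by
    intro k hk U _ G
    obtain ⟨_, ⟨φ⟩⟩ := Finset.mem_filter.mp hk
    exact Nat.card_congr (injhomEquiv φ)
  have hCsum : ∀ (U : Type) [Finite U] (G : SimpleGraph U),
      ∑ k ∈ C, c k * (Nat.card {f : H k →g G // Function.Injective ⇑f} : ℝ)
        = (∑ k ∈ C, c k) * (Nat.card {f : H j₀ →g G // Function.Injective ⇑f} : ℝ) := by
    intro U _ G
    rw [Finset.sum_mul]
    exact Finset.sum_congr rfl fun k hk => by rw [hcardC k hk U G]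
  -- evaluate the relation at H j₀
  have hC : ∑ k ∈ C, c k = 0 := by
    have hrel0 := hrel (W j₀) (H j₀)
    rw [← Finset.sum_filter_add_sum_filter_not t (fun k => Nonempty (H k ≃g H j₀))] at hrel0
    have h2 : ∑ k ∈ t.filter (fun k => ¬ Nonempty (H k ≃g H j₀)),
        c k * (Nat.card {f : H k →g H j₀ // Function.Injective ⇑f} : ℝ) = 0 := by
      apply Finset.sum_eq_zero
      intro k hk
      obtain ⟨hkt, hkn⟩ := Finset.mem_filter.mp hk
      rw [hzero k hkt (fun hc => hkn (Finset.mem_filter.mp hc).2), Nat.cast_zero, mul_zero]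
    rw [h2, add_zero, hCsum (W j₀) (H j₀)] at hrel0
    have hNne : ((Nat.card {f : H j₀ →g H j₀ // Function.Injective ⇑f} : ℝ)) ≠ 0 :=
      Nat.cast_ne_zero.mpr (injhom_card_pos (H j₀)).ne'
    exact (mul_eq_zero.mp hrel0).resolve_right hNne
  -- the relation restricted to t \ C
  have htsub : t \ C ⊂ t := Finset.sdiff_ssubset (Finset.filter_subset _ _) ⟨j₀, hj₀C⟩
  have hts : t \ C = t.filter (fun k => ¬ Nonempty (H k ≃g H j₀)) := by
    ext k
    simp only [Finset.mem_sdiff, Finset.mem_filter, hCdef]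
    tauto
  have hrel' : ∀ (U : Type) [Finite U] (G : SimpleGraph U),
      ∑ k ∈ t \ C, c k * (Nat.card {f : H k →g G // Function.Injective ⇑f} : ℝ) = 0 := by
    intro U _ G
    have h0 := hrel U G
    rw [← Finset.sum_filter_add_sum_filter_not t (fun k => Nonempty (H k ≃g H j₀)),
      hCsum U G, hC, zero_mul, zero_add] at h0
    rw [hts]
    exact h0
  -- conclude
  by_cases hiso : Nonempty (H j ≃g H j₀)
  · obtain ⟨χ⟩ := hiso
    have heqC : t.filter (fun k => Nonempty (H k ≃g H j)) = C := by
      ext k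
      simp only [Finset.mem_filter, hCdef]
      exact and_congr_right fun _ =>
        ⟨fun ⟨ψ⟩ => ⟨ψ.trans χ⟩, fun ⟨ψ⟩ => ⟨ψ.trans χ.symm⟩⟩
    rw [heqC]
    exact hC
  · have hjt' : j ∈ t \ C :=
      Finset.mem_sdiff.mpr ⟨hj, fun hc => hiso (Finset.mem_filter.mp hc).2⟩
    have hres := ih (t \ C) htsub hrel' j hjt'
    have heq : t.filter (fun k => Nonempty (H k ≃g H j))
        = (t \ C).filter (fun k => Nonempty (H k ≃g H j)) := by
      ext k
      simp only [Finset.mem_filter, Finset.mem_sdiff, hCdef]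
      constructor
      · rintro ⟨hkt, hk⟩
        refine ⟨⟨hkt, fun hc => ?_⟩, hk⟩
        obtain ⟨ψ⟩ := hc.2
        obtain ⟨χ⟩ := hk
        exact hiso ⟨χ.symm.trans ψ⟩
      · rintro ⟨⟨hkt, _⟩, hk⟩
        exact ⟨hkt, hk⟩
    rw [heq]
    exact hres

open Filter Topology

/-- the parameters hom(F,·) for pairwise non-isomorphic finite simple graphs F
are linearly independent. -/
theorem stmt10 (ℓ : ℕ) (V : Fin ℓ → Type) [∀ i, Finite (V i)]
    (F : ∀ i, SimpleGraph (V i))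
    (hni : ∀ i j, i ≠ j → IsEmpty (F i ≃g F j))
    (a : Fin ℓ → ℝ)
    (h : ∀ (U : Type) [Finite U] (G : SimpleGraph U),
      ∑ i, a i * (Nat.card (F i →g G) : ℝ) = 0) :
    ∀ i, a i = 0 := by
  letI : ∀ i, Fintype (GoodSetoid (F i)) := fun i => Fintype.ofFinite _
  set ι := (i : Fin ℓ) × GoodSetoid (F i) with hι
  set W' : ι → Type := fun j => Quotient j.2.1 with hW'
  set H' : ∀ j : ι, SimpleGraph (W' j) := fun j => quotGraph (F j.1) j.2.1 with hH'
  set c : ι → ℝ := fun j => a j.1 with hc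
  -- the relation in terms of injective-hom counts
  have hrel : ∀ (U : Type) [Finite U] (G : SimpleGraph U),
      ∑ j ∈ (Finset.univ : Finset ι),
        c j * (Nat.card {f : H' j →g G // Function.Injective ⇑f} : ℝ) = 0 := by
    intro U _ G
    rw [← Finset.univ_sigma_univ, Finset.sum_sigma]
    have hstep : ∀ i : Fin ℓ,
        ∑ s : GoodSetoid (F i),
          c ⟨i, s⟩ * (Nat.card {f : H' ⟨i, s⟩ →g G // Function.Injective ⇑f} : ℝ)
          = a i * (Nat.card (F i →g G) : ℝ) := by
      intro i
      rw [card_hom_eq_sum (F i) G, Nat.cast_sum, Finset.mul_sum]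
    rw [Finset.sum_congr rfl fun i _ => hstep i]
    exact h U G
  have key := injLinIndep W' H' c Finset.univ hrel
  -- the distinguished discrete good setoid
  have hgood : ∀ i : Fin ℓ, ∀ u v : V i, (F i).Adj u v → ¬ (Setoid.ker (id : V i → V i)) u v :=
    fun i u v hadj hkv => (F i).ne_of_adj hadj hkv
  set s₀ : ∀ i : Fin ℓ, GoodSetoid (F i) := fun i => ⟨Setoid.ker id, hgood i⟩ with hs₀
  have hdisc₀ : ∀ i : Fin ℓ, ∀ u v : V i, (s₀ i).1 u v → u = v := fun i u v h => h
  have iso₀ : ∀ i : Fin ℓ, quotGraph (F i) (s₀ i).1 ≃g F i :=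
    fun i => quotIsoOfDiscrete (F i) (s₀ i).1 (hdisc₀ i)
  -- downward induction on the number of strictly larger graphs
  have main : ∀ n : ℕ, ∀ i : Fin ℓ,
      (Finset.univ.filter (fun k : Fin ℓ => Nat.card (V i) < Nat.card (V k))).card < n →
      a i = 0 := by
    intro n
    induction n with
    | zero => exact fun i h => absurd h (Nat.not_lt_zero _)
    | succ n ih =>
      intro i hμ
      have hkey := key ⟨i, s₀ i⟩ (Finset.mem_univ _)
      set S := Finset.univ.filter
        (fun k : ι => Nonempty (H' k ≃g H' ⟨i, s₀ i⟩)) with hS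
      have hmem : (⟨i, s₀ i⟩ : ι) ∈ S :=
        Finset.mem_filter.mpr ⟨Finset.mem_univ _,
          ⟨(SimpleGraph.Iso.refl : H' ⟨i, s₀ i⟩ ≃g H' ⟨i, s₀ i⟩)⟩⟩
      rw [← Finset.add_sum_erase S c hmem] at hkey
      have hz : ∀ p ∈ S.erase ⟨i, s₀ i⟩, c p = 0 := by
        rintro ⟨k, s⟩ hp
        obtain ⟨hne, hpS⟩ := Finset.mem_erase.mp hp
        obtain ⟨-, ⟨ψ⟩⟩ := Finset.mem_filter.mp hpS
        have ψ' : quotGraph (F k) s.1 ≃g F i := ψ.trans (iso₀ i)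
        have hcards : Nat.card (Quotient s.1) = Nat.card (V i) := Nat.card_congr ψ'.toEquiv
        by_cases hck : Nat.card (Quotient s.1) = Nat.card (V k)
        · have hd := discrete_of_card s.1 hck
          have isok : F k ≃g F i := (quotIsoOfDiscrete (F k) s.1 hd).symm.trans ψ'
          have hki : k = i := by
            by_contra hki
            exact (hni k i hki).false isok
          subst hki
          have hss : s = s₀ k := Subtype.ext (Setoid.ext fun u v =>
            ⟨fun hsuv => hd u v hsuv, fun hsuv => by
              cases (show u = v from hsuv); exact s.1.iseqv.refl u⟩)
          exact absurd (by rw [hss]) hne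
        · have hle := quot_card_le s.1 (W := V k)
          have hlt : Nat.card (V i) < Nat.card (V k) := by omega
          have hsub : (Finset.univ.filter
                (fun k' : Fin ℓ => Nat.card (V k) < Nat.card (V k')))
              ⊂ (Finset.univ.filter
                (fun k' : Fin ℓ => Nat.card (V i) < Nat.card (V k'))) := by
            rw [Finset.ssubset_def]
            constructor
            · intro k' hk'
              rw [Finset.mem_filter] at hk' ⊢
              exact ⟨hk'.1, lt_trans hlt hk'.2⟩
            · intro hcontra
              have hk1 : k ∈ Finset.univ.filter
                  (fun k' : Fin ℓ => Nat.card (V i) < Nat.card (V k')) :=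
                Finset.mem_filter.mpr ⟨Finset.mem_univ _, hlt⟩
              have hk2 := hcontra hk1
              exact lt_irrefl _ (Finset.mem_filter.mp hk2).2
          exact ih k (lt_of_lt_of_le (Finset.card_lt_card hsub) (Nat.lt_succ_iff.mp hμ))
      rw [Finset.sum_eq_zero hz, add_zero] at hkey
      exact hkey
  exact fun i => main _ i (Nat.lt_succ_self _)
end

section
/- Let f be a real-valued, isomorphism-invariant function on finite nonempty simple graphs which is left-continuous, i.e., (f(G_n))_n converges for every sequence (G_n) of finite nonempty simple graphs such that (t(F,G_n))_n converges for every finite simple graph F. Then for every ε > 0 there exist finite simple graphs F_1,…,F_ℓ and real numbers a_1,…,a_ℓ such that |Σ_{i=1}^ℓ a_i · t(F_i,G) − f(G)| < ε holds for every finite nonempty simple graph G. -/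
open Filter Topology

/-! ### Auxiliary definitions and lemmas -/

/-- composing with isomorphisms gives an equivalence of hom types -/
def homCongr {W W' V V' : Type*} {F : SimpleGraph W} {F' : SimpleGraph W'}
    {G : SimpleGraph V} {G' : SimpleGraph V'} (e : F ≃g F') (e' : G ≃g G') :
    (F →g G) ≃ (F' →g G') where
  toFun h := e'.toEmbedding.toHom.comp (h.comp e.symm.toEmbedding.toHom)
  invFun h := e'.symm.toEmbedding.toHom.comp (h.comp e.toEmbedding.toHom)
  left_inv h := by ext x; simp
  right_inv h := by ext x; simp

lemma homDensity_congr {W W' V V' : Type*} {F : SimpleGraph W} {F' : SimpleGraph W'}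
    {G : SimpleGraph V} {G' : SimpleGraph V'} (e : F ≃g F') (e' : G ≃g G') :
    homDensity F G = homDensity F' G' := by
  unfold homDensity
  rw [Nat.card_congr (homCongr e e'), Nat.card_congr e.toEquiv, Nat.card_congr e'.toEquiv]

lemma homDensity_nonneg {W V : Type*} (F : SimpleGraph W) (G : SimpleGraph V) :
    0 ≤ homDensity F G := by
  unfold homDensity; positivity

lemma homDensity_le_one {W V : Type*} [Finite W] [Finite V] [Nonempty V]
    (F : SimpleGraph W) (G : SimpleGraph V) : homDensity F G ≤ 1 := by
  unfold homDensity
  have hv : 0 < Nat.card V := Nat.card_pos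
  rw [div_le_one (by positivity)]
  have h1 : Nat.card (F →g G) ≤ Nat.card (W → V) :=
    Nat.card_le_card_of_injective (fun h => (h : W → V)) (fun a b hab => by
      ext x; exact congrFun hab x)
  rw [Nat.card_fun] at h1
  exact_mod_cast h1

/-- disjoint union of graphs -/
def gsum {W W' : Type*} (F : SimpleGraph W) (F' : SimpleGraph W') : SimpleGraph (W ⊕ W') where
  Adj x y := Sum.LiftRel F.Adj F'.Adj x y
  symm := ⟨fun x y h => by cases h with
    | inl h => exact Sum.LiftRel.inl (F.symm.symm _ _ h)
    | inr h => exact Sum.LiftRel.inr (F'.symm.symm _ _ h)⟩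
  loopless := ⟨fun x h => by cases h with
    | inl h => exact F.loopless.irrefl _ h
    | inr h => exact F'.loopless.irrefl _ h⟩

def gsumHomEquiv {W W' V : Type*} (F : SimpleGraph W) (F' : SimpleGraph W') (G : SimpleGraph V) :
    (gsum F F' →g G) ≃ (F →g G) × (F' →g G) where
  toFun h := (⟨fun w => h (Sum.inl w), fun hadj => h.map_rel (Sum.LiftRel.inl hadj)⟩,
              ⟨fun w => h (Sum.inr w), fun hadj => h.map_rel (Sum.LiftRel.inr hadj)⟩)
  invFun p := ⟨Sum.elim p.1 p.2, fun hadj => by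
    cases hadj with
    | inl h => exact p.1.map_rel h
    | inr h => exact p.2.map_rel h⟩
  left_inv h := by ext x; cases x <;> rfl
  right_inv p := rfl

lemma homDensity_gsum {W W' V : Type*} [Finite W] [Finite W']
    (F : SimpleGraph W) (F' : SimpleGraph W') (G : SimpleGraph V) :
    homDensity (gsum F F') G = homDensity F G * homDensity F' G := by
  unfold homDensity
  rw [Nat.card_congr (gsumHomEquiv F F' G), Nat.card_prod, Nat.card_sum, pow_add,
    Nat.cast_mul, div_mul_div_comm]

lemma homDensity_bot_fin_zero {V : Type*} (G : SimpleGraph V) :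
    homDensity (⊥ : SimpleGraph (Fin 0)) G = 1 := by
  have : Unique ((⊥ : SimpleGraph (Fin 0)) →g G) :=
    { default := ⟨Fin.elim0, fun {a} => Fin.elim0 a⟩
      uniq := fun h => by ext x; exact Fin.elim0 x }
  unfold homDensity
  rw [Nat.card_unique]
  simp

/-- iso onto the mapped graph along an equiv -/
def isoMap {W W' : Type*} (F : SimpleGraph W) (e : W ≃ W') :
    F ≃g F.map e.toEmbedding where
  toEquiv := e
  map_rel_iff' := by
    intro a b
    simp only [SimpleGraph.map_adj, Equiv.coe_toEmbedding]
    constructor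
    · rintro ⟨-, u, v, h, hu, hv⟩
      rwa [← e.injective hu, ← e.injective hv]
    · intro h; exact ⟨e.injective.ne h.ne, a, b, h, rfl, rfl⟩

lemma tendsto_interleave {α : Type*} [TopologicalSpace α] {u v : ℕ → α} {a : α}
    (hu : Tendsto u atTop (𝓝 a)) (hv : Tendsto v atTop (𝓝 a)) :
    Tendsto (fun k => if Even k then u (k / 2) else v (k / 2)) atTop (𝓝 a) := by
  rw [tendsto_def] at hu hv ⊢
  intro s hs
  obtain ⟨N₁, hN₁⟩ := eventually_atTop.mp (hu s hs)
  obtain ⟨N₂, hN₂⟩ := eventually_atTop.mp (hv s hs)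
  rw [mem_atTop_sets]
  refine ⟨2 * (max N₁ N₂), fun k hk => ?_⟩
  have h2 : max N₁ N₂ ≤ k / 2 := Nat.le_div_iff_mul_le (by norm_num) |>.2 (by omega)
  simp only [Set.mem_preimage]
  split
  · exact hN₁ _ (le_trans (le_max_left _ _) h2)
  · exact hN₂ _ (le_trans (le_max_right _ _) h2)

lemma diagonal_lemma {T : Type*} [TopologicalSpace T] [FirstCountableTopology T]
    (u : ℕ → ℕ → T) (w : ℕ → ℕ → ℝ) (x : ℕ → T) (xl : T) (r : ℕ → ℝ)
    (hu : ∀ m, Tendsto (u m) atTop (𝓝 (x m)))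
    (hw : ∀ m, Tendsto (w m) atTop (𝓝 (r m)))
    (hx : Tendsto x atTop (𝓝 xl)) :
    ∃ k : ℕ → ℕ, Tendsto (fun m => u m (k m)) atTop (𝓝 xl) ∧
      Tendsto (fun m => w m (k m) - r m) atTop (𝓝 0) := by
  obtain ⟨B, hB⟩ := (𝓝 xl).exists_antitone_basis
  set B' : ℕ → Set T := fun j => interior (B j) with hB'def
  have hB'open : ∀ j, IsOpen (B' j) := fun j => isOpen_interior
  have hB'mem : ∀ j, B' j ∈ 𝓝 xl := fun j =>
    (hB'open j).mem_nhds (mem_interior_iff_mem_nhds.2 (hB.1.mem_of_mem trivial))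
  have hN : ∀ j, ∃ N, ∀ m ≥ N, x m ∈ B' j := fun j => eventually_atTop.mp (hx (hB'mem j))
  choose N hN using hN
  set S : ℕ → Set T := fun m => ⋂ j ∈ (Finset.range (m+1)).filter (fun j => N j ≤ m), B' j
    with hSdef
  have hSopen : ∀ m, IsOpen (S m) := fun m => isOpen_biInter_finset (fun j _ => hB'open j)
  have hSmem : ∀ m, x m ∈ S m := by
    intro m
    exact Set.mem_iInter₂.2 fun j hj => hN j m (Finset.mem_filter.mp hj).2
  have hkex : ∀ m, ∃ k, u m k ∈ S m ∧ |w m k - r m| < 1 / (m + 1) := by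
    intro m
    have h1 : ∀ᶠ k in atTop, u m k ∈ S m := (hu m) ((hSopen m).mem_nhds (hSmem m))
    have h2 : ∀ᶠ k in atTop, |w m k - r m| < 1 / (m + 1 : ℝ) := by
      obtain ⟨K, hK⟩ := Metric.tendsto_atTop.mp (hw m) (1 / (m + 1 : ℝ)) (by positivity)
      exact eventually_atTop.2 ⟨K, fun k hk => by
        have := hK k hk; rwa [Real.dist_eq] at this⟩
    exact (h1.and h2).exists
  choose k hk1 hk2 using hkex
  refine ⟨k, ?_, ?_⟩
  · rw [hB.1.tendsto_right_iff]
    intro j _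
    rw [eventually_atTop]
    refine ⟨max j (N j), fun m hm => ?_⟩
    have hjm : j ∈ (Finset.range (m+1)).filter (fun j => N j ≤ m) := by
      rw [Finset.mem_filter, Finset.mem_range]; omega
    exact interior_subset (Set.mem_iInter₂.1 (hk1 m) j hjm)
  · apply squeeze_zero_norm (fun m => le_of_lt (by simpa using hk2 m))
    simpa using tendsto_one_div_add_atTop_nhds_zero_nat (𝕜 := ℝ)

/-- index type for coordinates: all finite graphs on `Fin n` -/
abbrev IG : Type := Σ n : ℕ, SimpleGraph (Fin n)
/-- canonical nonempty finite graphs -/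
abbrev CGr : Type := Σ n : ℕ, SimpleGraph (Fin (n+1))

/-- profile of homomorphism densities -/
noncomputable def phiCG (q : CGr) : IG → ℝ := fun i => homDensity i.2 q.2

/-- the compact space of profiles -/
noncomputable def Xspace : Set (IG → ℝ) := closure (Set.range phiCG)

lemma Xspace_compact : IsCompact Xspace := by
  apply IsCompact.of_isClosed_subset (isCompact_univ_pi (fun i : IG => isCompact_Icc
    (a := (0:ℝ)) (b := 1))) isClosed_closure
  apply closure_minimal ?_ (isClosed_set_pi (fun i _ => isClosed_Icc))
  rintro _ ⟨q, rfl⟩ i _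
  exact ⟨homDensity_nonneg _ _, homDensity_le_one _ _⟩

instance : CompactSpace ↥Xspace := isCompact_iff_compactSpace.mp Xspace_compact

noncomputable def piCoord (i : IG) : C(↥Xspace, ℝ) :=
  ⟨fun x => (x : IG → ℝ) i, (continuous_apply i).comp continuous_subtype_val⟩

lemma exists_canonical {U : Type} [Finite U] [Nonempty U] (G : SimpleGraph U) :
    ∃ q : CGr, Nonempty (G ≃g q.2) := by
  cases nonempty_fintype U
  obtain ⟨n, hn⟩ : ∃ n, Fintype.card U = n + 1 :=
    ⟨Fintype.card U - 1, by have := Fintype.card_pos (α := U); omega⟩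
  let e : U ≃ Fin (n+1) := (Fintype.equivFin U).trans (finCongr hn)
  exact ⟨⟨n, G.map e.toEmbedding⟩, ⟨isoMap G e⟩⟩

lemma densities_conv (s : ℕ → CGr) (x : IG → ℝ)
    (hs : Tendsto (fun k => phiCG (s k)) atTop (𝓝 x)) (W : Type) (hW : Finite W)
    (F : SimpleGraph W) :
    ∃ r, Tendsto (fun k => homDensity F ((s k).2)) atTop (𝓝 r) := by
  cases nonempty_fintype W
  let e := Fintype.equivFin W
  let i : IG := ⟨Fintype.card W, F.map e.toEmbedding⟩
  refine ⟨x i, ?_⟩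
  have h := tendsto_pi_nhds.mp hs i
  have heq : (fun k => homDensity F ((s k).2)) = fun k => phiCG (s k) i := by
    funext k
    show homDensity F ((s k).2) = homDensity (SimpleGraph.map e.toEmbedding F) ((s k).2)
    exact homDensity_congr (isoMap F e) (SimpleGraph.Iso.refl)
  rw [heq]
  exact h

/-- every left-continuous isomorphism-invariant graph parameter can be
uniformly approximated by finite linear combinations of homomorphism densities. -/
theorem stmt13 (f : ∀ (U : Type), SimpleGraph U → ℝ)
    (hinv : ∀ (U U' : Type) (G : SimpleGraph U) (G' : SimpleGraph U'),
      Nonempty (G ≃g G') → f U G = f U' G')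
    (hcont : ∀ (V : ℕ → Type) (_ : ∀ n, Finite (V n)) (_ : ∀ n, Nonempty (V n))
      (G : ∀ n, SimpleGraph (V n)),
      (∀ (W : Type) (_ : Finite W) (F : SimpleGraph W),
        ∃ r : ℝ, Tendsto (fun n => homDensity F (G n)) atTop (𝓝 r)) →
      ∃ r : ℝ, Tendsto (fun n => f (V n) (G n)) atTop (𝓝 r)) :
    ∀ ε : ℝ, 0 < ε →
      ∃ (ℓ : ℕ) (W : Fin ℓ → Type) (_ : ∀ i, Finite (W i))
        (F : ∀ i, SimpleGraph (W i)) (a : Fin ℓ → ℝ),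
        ∀ (U : Type) [Finite U] [Nonempty U] (G : SimpleGraph U),
          |(∑ i, a i * homDensity (F i) G) - f U G| < ε := by
  intro ε hε
  set fG : CGr → ℝ := fun q => f (Fin (q.1+1)) q.2 with hfGdef
  -- the limit exists along any profile-convergent sequence of canonical graphs
  have hcont' : ∀ (s : ℕ → CGr) (x : IG → ℝ),
      Tendsto (fun k => phiCG (s k)) atTop (𝓝 x) →
      ∃ r, Tendsto (fun k => fG (s k)) atTop (𝓝 r) := by
    intro s x hs
    exact hcont (fun k => Fin ((s k).1 + 1)) (fun k => inferInstance) (fun k => inferInstance)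
      (fun k => (s k).2) (fun W hW F => densities_conv s x hs W hW F)
  -- uniqueness of the limit via interleaving
  have huniq : ∀ (s s' : ℕ → CGr) (x : IG → ℝ) (r r' : ℝ),
      Tendsto (fun k => phiCG (s k)) atTop (𝓝 x) →
      Tendsto (fun k => phiCG (s' k)) atTop (𝓝 x) →
      Tendsto (fun k => fG (s k)) atTop (𝓝 r) →
      Tendsto (fun k => fG (s' k)) atTop (𝓝 r') → r = r' := by
    intro s s' x r r' hs hs' hr hr'
    set m : ℕ → CGr := fun k => if Even k then s (k/2) else s' (k/2) with hm
    have hφm : Tendsto (fun k => phiCG (m k)) atTop (𝓝 x) := by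
      have h := tendsto_interleave hs hs'
      have : (fun k => phiCG (m k)) =
          fun k => if Even k then phiCG (s (k/2)) else phiCG (s' (k/2)) := by
        funext k; rw [hm]; dsimp only; rw [apply_ite phiCG]
      rw [this]; exact h
    obtain ⟨ρ, hρ⟩ := hcont' m x hφm
    have h2 : Tendsto (fun k : ℕ => 2 * k) atTop atTop :=
      StrictMono.tendsto_atTop (fun a b hab => by omega)
    have h3 : Tendsto (fun k : ℕ => 2 * k + 1) atTop atTop :=
      StrictMono.tendsto_atTop (fun a b hab => by omega)
    have hms : (fun k => fG (m (2 * k))) = fun k => fG (s k) := by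
      funext k
      have he : Even (2 * k) := even_two_mul k
      have hd : 2 * k / 2 = k := by omega
      rw [hm]; dsimp only; rw [if_pos he, hd]
    have hms' : (fun k => fG (m (2 * k + 1))) = fun k => fG (s' k) := by
      funext k
      have he : ¬ Even (2 * k + 1) := by simp [Nat.even_add_one, parity_simps]
      have hd : (2 * k + 1) / 2 = k := by omega
      rw [hm]; dsimp only; rw [if_neg he, hd]
    have hrρ : r = ρ := by
      refine tendsto_nhds_unique hr ?_
      rw [← hms]; exact hρ.comp h2
    have hr'ρ : r' = ρ := by
      refine tendsto_nhds_unique hr' ?_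
      rw [← hms']; exact hρ.comp h3
    exact hrρ.trans hr'ρ.symm
  -- choose approximating sequences for every point of the closure
  have hseq : ∀ x : ↥Xspace, ∃ q : ℕ → CGr,
      Tendsto (fun k => phiCG (q k)) atTop (𝓝 (x : IG → ℝ)) := by
    intro x
    obtain ⟨u, hu1, hu2⟩ := mem_closure_iff_seq_limit.mp x.2
    choose q hq using hu1
    refine ⟨q, ?_⟩
    have : (fun k => phiCG (q k)) = u := funext fun k => hq k
    rw [this]; exact hu2
  choose cs hcs using hseq
  have hgl : ∀ x : ↥Xspace, ∃ r, Tendsto (fun k => fG (cs x k)) atTop (𝓝 r) :=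
    fun x => hcont' _ _ (hcs x)
  choose g hg using hgl
  have hgrange : ∀ (q : CGr) (h : phiCG q ∈ Xspace), g ⟨phiCG q, h⟩ = fG q := by
    intro q h
    exact huniq (cs ⟨phiCG q, h⟩) (fun _ => q) (phiCG q) _ _ (hcs _) tendsto_const_nhds
      (hg _) tendsto_const_nhds
  -- continuity of g
  have hgc : Continuous g := by
    rw [continuous_iff_seqContinuous]
    intro x xl hx
    have hx' : Tendsto (fun m => ((x m : IG → ℝ))) atTop (𝓝 (xl : IG → ℝ)) :=
      (continuous_subtype_val.tendsto xl).comp hx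
    obtain ⟨k, hk1, hk2⟩ := diagonal_lemma (fun m j => phiCG (cs (x m) j))
      (fun m j => fG (cs (x m) j)) (fun m => (x m : IG → ℝ)) (xl : IG → ℝ)
      (fun m => g (x m)) (fun m => hcs (x m)) (fun m => hg (x m)) hx'
    set d : ℕ → CGr := fun m => cs (x m) (k m) with hd
    obtain ⟨ρ, hρ⟩ := hcont' d (xl : IG → ℝ) hk1
    have hρeq : ρ = g xl := huniq d (cs xl) (xl : IG → ℝ) ρ (g xl) hk1 (hcs xl) hρ (hg xl)
    have hfin : Tendsto (fun m => g (x m)) atTop (𝓝 ρ) := by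
      have := hρ.sub hk2
      simpa [hd] using this
    rw [← hρeq]
    exact hfin
  -- Stone–Weierstrass
  set A : Subalgebra ℝ C(↥Xspace, ℝ) := Algebra.adjoin ℝ (Set.range piCoord) with hA
  have hsep : A.SeparatesPoints := by
    intro x y hxy
    have hne : (x : IG → ℝ) ≠ (y : IG → ℝ) := fun h => hxy (Subtype.ext h)
    obtain ⟨i, hi⟩ := Function.ne_iff.mp hne
    exact ⟨piCoord i, ⟨piCoord i, Algebra.subset_adjoin (Set.mem_range_self i), rfl⟩, hi⟩
  have hdense := ContinuousMap.subalgebra_topologicalClosure_eq_top_of_separatesPoints A hsep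
  set gc : C(↥Xspace, ℝ) := ⟨g, hgc⟩ with hgcdef
  have hgcl : gc ∈ closure (A : Set C(↥Xspace, ℝ)) := by
    rw [← Subalgebra.topologicalClosure_coe, hdense]
    simp
  obtain ⟨p, hpA, hpd⟩ := Metric.mem_closure_iff.mp hgcl ε hε
  -- every element of the algebra is a linear combination of densities
  have hP : ∀ (p : C(↥Xspace, ℝ)), p ∈ A →
      ∃ (ι : Type) (_ : Fintype ι) (W : ι → Type) (_ : ∀ i, Finite (W i))
        (F : ∀ i, SimpleGraph (W i)) (a : ι → ℝ),
        ∀ (U : Type) (_ : Finite U) (_ : Nonempty U) (G : SimpleGraph U)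
          (hm : (fun i : IG => homDensity i.2 G) ∈ Xspace),
          p ⟨_, hm⟩ = ∑ i, a i * homDensity (F i) G := by
    intro p hp
    induction hp using Algebra.adjoin_induction with
    | mem q hq =>
      obtain ⟨i, rfl⟩ := hq
      refine ⟨PUnit, inferInstance, fun _ => Fin i.1, fun _ => inferInstance,
        fun _ => i.2, fun _ => 1, ?_⟩
      intro U _ _ G hm
      simp [piCoord]
    | algebraMap r =>
      refine ⟨PUnit, inferInstance, fun _ => Fin 0, fun _ => inferInstance,
        fun _ => ⊥, fun _ => r, ?_⟩
      intro U _ _ G hm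
      simp [homDensity_bot_fin_zero]
    | add p q hpmem hqmem ihp ihq =>
      obtain ⟨ι₁, i1, W₁, fin1, F₁, a₁, h₁⟩ := ihp
      obtain ⟨ι₂, i2, W₂, fin2, F₂, a₂, h₂⟩ := ihq
      refine ⟨ι₁ ⊕ ι₂, inferInstance, Sum.elim W₁ W₂,
        (fun i => match i with | .inl a => fin1 a | .inr b => fin2 b),
        (fun i => match i with | .inl a => F₁ a | .inr b => F₂ b),
        Sum.elim a₁ a₂, ?_⟩
      intro U iU nU G hm
      rw [ContinuousMap.add_apply, h₁ U iU nU G hm, h₂ U iU nU G hm, Fintype.sum_sum_type]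
      rfl
    | mul p q hpmem hqmem ihp ihq =>
      obtain ⟨ι₁, i1, W₁, fin1, F₁, a₁, h₁⟩ := ihp
      obtain ⟨ι₂, i2, W₂, fin2, F₂, a₂, h₂⟩ := ihq
      refine ⟨ι₁ × ι₂, inferInstance, fun i => W₁ i.1 ⊕ W₂ i.2,
        (fun i => by haveI := fin1 i.1; haveI := fin2 i.2; infer_instance),
        fun i => gsum (F₁ i.1) (F₂ i.2), fun i => a₁ i.1 * a₂ i.2, ?_⟩
      intro U iU nU G hm
      rw [ContinuousMap.mul_apply, h₁ U iU nU G hm, h₂ U iU nU G hm, Finset.sum_mul_sum,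
        Fintype.sum_prod_type]
      refine Finset.sum_congr rfl fun i _ => Finset.sum_congr rfl fun j _ => ?_
      haveI := fin1 i
      haveI := fin2 j
      rw [homDensity_gsum]
      ring
  obtain ⟨ι, i1, W, fin, F, a, ha⟩ := hP p hpA
  let e : Fin (Fintype.card ι) ≃ ι := (Fintype.equivFin ι).symm
  refine ⟨Fintype.card ι, fun j => W (e j), fun j => fin (e j), fun j => F (e j),
    fun j => a (e j), ?_⟩
  intro U iU nU G
  obtain ⟨q, ⟨iso⟩⟩ := exists_canonical G
  have hΦ : (fun i : IG => homDensity i.2 G) = phiCG q := by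
    funext i
    show homDensity i.2 G = homDensity i.2 q.2
    exact homDensity_congr SimpleGraph.Iso.refl iso
  have hm : (fun i : IG => homDensity i.2 G) ∈ Xspace := by
    rw [hΦ]; exact subset_closure (Set.mem_range_self q)
  have h1 : p ⟨_, hm⟩ = ∑ i, a i * homDensity (F i) G := ha U iU nU G hm
  have h2 : g ⟨_, hm⟩ = f U G := by
    have hxeq : (⟨(fun i : IG => homDensity i.2 G), hm⟩ : ↥Xspace) = ⟨phiCG q, hΦ ▸ hm⟩ :=
      Subtype.ext hΦ
    rw [hxeq, hgrange]
    exact (hinv U (Fin (q.1+1)) G q.2 ⟨iso⟩).symm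
  have hsum : (∑ j, a (e j) * homDensity (F (e j)) G) = ∑ i, a i * homDensity (F i) G :=
    Fintype.sum_equiv e _ _ (fun j => rfl)
  have hdapp : dist (p ⟨_, hm⟩) (gc ⟨_, hm⟩) ≤ dist p gc := ContinuousMap.dist_apply_le_dist _
  have hgcapp : gc ⟨_, hm⟩ = g ⟨_, hm⟩ := rfl
  calc |(∑ j, a (e j) * homDensity (F (e j)) G) - f U G|
      = dist (p ⟨_, hm⟩) (gc ⟨_, hm⟩) := by
        rw [hsum, ← h1, hgcapp, h2, Real.dist_eq]
    _ ≤ dist p gc := hdapp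
    _ = dist gc p := dist_comm _ _
    _ < ε := hpd
end
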